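/- arXiv:1705.08524 — 7 statements merged into one kernel-verified Lean document; each statement's English description precedes it below -/
import Mathlib

section
/- Fix a partition P = (S_1,…,S_n) of V(G) into sets of size r, and assign treatment by choosing independently for each block S_i a uniformly random p-subset of its r elements to treat. If each interference function f_v is K_v-Lipschitz, then |E[ξ]| ≤ (1/(n r (r−1))) Σ_{v ∈ V(G)} (|P_v ∩ N(v)| / d(v)) K_v, where P_v is the block of P containing v. -/
open Finset


section Aux
variable {V : Type*} [DecidableEq V] {n : ℕ} (blk : V → Fin n)

lemma blk_swap {x y : V} (h : blk x = blk y) (z : V) :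
    blk (Equiv.swap x y z) = blk z := by
  rcases eq_or_ne z x with rfl | hx
  · rw [Equiv.swap_apply_left]; exact h.symm
  rcases eq_or_ne z y with rfl | hy
  · rw [Equiv.swap_apply_right]; exact h
  · rw [Equiv.swap_apply_of_ne_of_ne hx hy]

lemma exists_perm {v u a b : V} (hvu : v ≠ u) (hab : a ≠ b)
    (h1 : blk u = blk v) (h2 : blk a = blk v) (h3 : blk b = blk v) :
    ∃ σ : Equiv.Perm V, (∀ x, blk (σ x) = blk x) ∧ σ v = a ∧ σ u = b := by
  set u' := Equiv.swap v a u with hu'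
  have hu'blk : blk u' = blk v := by
    rw [hu', blk_swap blk h2.symm]; exact h1
  have hau' : a ≠ u' := by
    rcases eq_or_ne u a with rfl | hua
    · rw [hu', Equiv.swap_apply_right]
      rintro rfl; exact hvu rfl
    · rw [hu', Equiv.swap_apply_of_ne_of_ne hvu.symm hua]
      exact fun h => hua h.symm
  refine ⟨(Equiv.swap v a).trans (Equiv.swap u' b), fun x => ?_, ?_, ?_⟩
  · simp only [Equiv.trans_apply]
    rw [blk_swap blk (by rw [hu'blk, h3]), blk_swap blk h2.symm]
  · simp only [Equiv.trans_apply, Equiv.swap_apply_left]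
    exact Equiv.swap_apply_of_ne_of_ne hau' hab
  · simp only [Equiv.trans_apply, Equiv.swap_apply_left]
    exact Equiv.swap_apply_left _ _

lemma image_mem_D {p : ℕ} (σ : Equiv.Perm V) (hσ : ∀ x, blk (σ x) = blk x)
    (T : Finset V) (hT : ∀ i, (T.filter (fun x => blk x = i)).card = p) :
    ∀ i, ((T.image σ).filter (fun x => blk x = i)).card = p := by
  intro i
  rw [Finset.filter_image, Finset.card_image_of_injective _ σ.injective]
  have : (fun x => blk (σ x) = i) = (fun x => blk x = i) := by
    funext x; rw [hσ]
  simpa [Function.comp, hσ] using hT i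

end Aux

section Count
variable {V : Type*} [Fintype V] [DecidableEq V] {n : ℕ} (blk : V → Fin n)

lemma count_pair_eq (p : ℕ) {v u a b : V} (hvu : v ≠ u) (hab : a ≠ b)
    (h1 : blk u = blk v) (h2 : blk a = blk v) (h3 : blk b = blk v) :
    ((univ.filter (fun T : Finset V => ∀ i, (T.filter (fun x => blk x = i)).card = p)).filter
      (fun T => v ∈ T ∧ u ∉ T)).card =
    ((univ.filter (fun T : Finset V => ∀ i, (T.filter (fun x => blk x = i)).card = p)).filter
      (fun T => a ∈ T ∧ b ∉ T)).card := by
  obtain ⟨σ, hσ, hva, hub⟩ := exists_perm blk hvu hab h1 h2 h3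
  have hσ' : ∀ x, blk (σ.symm x) = blk x := fun x => by
    conv_rhs => rw [← σ.apply_symm_apply x, hσ]
  have hmemσ : ∀ (c : V) (T : Finset V), σ.symm c ∈ T ↔ c ∈ T.image σ := by
    intro c T
    simp only [Finset.mem_image]
    constructor
    · intro h; exact ⟨_, h, σ.apply_symm_apply c⟩
    · rintro ⟨x, hx, rfl⟩; rwa [σ.symm_apply_apply]
  apply Finset.card_bij' (fun T _ => T.image σ) (fun T _ => T.image σ.symm)
  · intro T _
    rw [Finset.image_image]
    simp
  · intro T _
    rw [Finset.image_image]
    simp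
  · intro T hT
    simp only [Finset.mem_filter, Finset.mem_univ, true_and] at hT ⊢
    obtain ⟨hP, hv, hu⟩ := hT
    refine ⟨image_mem_D blk σ hσ T hP, ?_, ?_⟩
    · rw [← hmemσ a T]; rwa [← hva, σ.symm_apply_apply]
    · rw [← hmemσ b T]; rwa [← hub, σ.symm_apply_apply]
  · intro T hT
    simp only [Finset.mem_filter, Finset.mem_univ, true_and] at hT ⊢
    obtain ⟨hP, ha, hb⟩ := hT
    have hmemσ' : ∀ (c : V) (S : Finset V), σ c ∈ S ↔ c ∈ S.image σ.symm := by
      intro c S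
      simp only [Finset.mem_image]
      constructor
      · intro h; exact ⟨_, h, σ.symm_apply_apply c⟩
      · rintro ⟨x, hx, rfl⟩; rwa [σ.apply_symm_apply]
    refine ⟨image_mem_D blk σ.symm hσ' T hP, ?_, ?_⟩
    · rw [← hmemσ' v T, hva]; exact ha
    · rw [← hmemσ' u T, hub]; exact hb

end Count

section Count2
variable {V : Type*} [Fintype V] [DecidableEq V] {n : ℕ}

lemma pair_count (blk : V → Fin n) (p q r : ℕ) (hr : r = p + q)
    (hblk : ∀ i : Fin n, (univ.filter (fun x => blk x = i)).card = r)
    {v u : V} (hvu : v ≠ u) (huv : blk u = blk v) :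
    r * (r - 1) *
      ((univ.filter (fun T : Finset V => ∀ i, (T.filter (fun x => blk x = i)).card = p)).filter
        (fun T => v ∈ T ∧ u ∉ T)).card =
    (univ.filter (fun T : Finset V => ∀ i, (T.filter (fun x => blk x = i)).card = p)).card
      * (p * q) := by
  set D : Finset (Finset V) :=
    univ.filter (fun T : Finset V => ∀ i, (T.filter (fun x => blk x = i)).card = p) with hD
  set B : Finset V := univ.filter (fun x => blk x = blk v) with hB
  have hBcard : B.card = r := hblk (blk v)
  have hBT : ∀ T ∈ D, (B ∩ T).card = p := by
    intro T hT
    simp only [hD, Finset.mem_filter, Finset.mem_univ, true_and] at hT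
    have : B ∩ T = T.filter (fun x => blk x = blk v) := by
      ext x; simp only [hB, Finset.mem_inter, Finset.mem_filter, Finset.mem_univ, true_and]
      tauto
    rw [this]; exact hT (blk v)
  have hBTd : ∀ T ∈ D, (B \ T).card = q := by
    intro T hT
    have := Finset.card_sdiff_add_card_inter B T
    rw [hBT T hT, hBcard] at this
    omega
  have key : ∑ a ∈ B, ∑ b ∈ B.erase a, (D.filter (fun T => a ∈ T ∧ b ∉ T)).card
      = D.card * (p * q) := by
    have h1 : ∀ a b : V, (D.filter (fun T => a ∈ T ∧ b ∉ T)).card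
        = ∑ T ∈ D, (if a ∈ T ∧ b ∉ T then 1 else 0) := by
      intro a b; rw [Finset.card_filter]
    simp only [h1]
    rw [Finset.sum_congr rfl (fun a _ => Finset.sum_comm), Finset.sum_comm]
    have h2 : ∀ T ∈ D, ∑ a ∈ B, ∑ b ∈ B.erase a, (if a ∈ T ∧ b ∉ T then 1 else 0)
        = p * q := by
      intro T hT
      have h3 : ∀ a ∈ B, ∑ b ∈ B.erase a, (if a ∈ T ∧ b ∉ T then 1 else 0)
          = if a ∈ T then q else 0 := by
        intro a ha
        by_cases haT : a ∈ T
        · simp only [haT, true_and, if_true]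
          have he : (B.erase a) \ T = B \ T := by
            ext x; simp only [Finset.mem_sdiff, Finset.mem_erase]
            constructor
            · tauto
            · rintro ⟨hx, hxT⟩; exact ⟨⟨fun h => hxT (h ▸ haT), hx⟩, hxT⟩
          calc ∑ b ∈ B.erase a, (if b ∉ T then 1 else 0)
              = ((B.erase a).filter (fun b => b ∉ T)).card := (Finset.card_filter _ _).symm
            _ = ((B.erase a) \ T).card := by rw [Finset.sdiff_eq_filter]
            _ = q := by rw [he]; exact hBTd T hT
        · simp [haT]
      rw [Finset.sum_congr rfl h3, ← Finset.sum_filter, Finset.sum_const, smul_eq_mul,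
        Finset.filter_mem_eq_inter, hBT T hT]
    rw [Finset.sum_congr rfl h2, Finset.sum_const, smul_eq_mul]
  have hall : ∀ a ∈ B, ∀ b ∈ B.erase a, (D.filter (fun T => a ∈ T ∧ b ∉ T)).card
      = (D.filter (fun T => v ∈ T ∧ u ∉ T)).card := by
    intro a ha b hb
    rw [Finset.mem_erase] at hb
    simp only [hB, Finset.mem_filter, Finset.mem_univ, true_and] at ha hb
    exact (count_pair_eq blk p hvu (Ne.symm hb.1) huv ha hb.2).symm
  have : ∑ a ∈ B, ∑ b ∈ B.erase a, (D.filter (fun T => a ∈ T ∧ b ∉ T)).card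
      = r * (r - 1) * (D.filter (fun T => v ∈ T ∧ u ∉ T)).card := by
    rw [Finset.sum_congr rfl (fun a ha => Finset.sum_congr rfl (hall a ha))]
    simp only [Finset.sum_const, smul_eq_mul]
    rw [Finset.sum_congr rfl (fun a ha => by rw [Finset.card_erase_of_mem ha, hBcard])]
    rw [Finset.sum_const, smul_eq_mul, hBcard, mul_assoc]
  omega

end Count2

section Ident
variable {V : Type*} [Fintype V] [DecidableEq V] {n : ℕ}

lemma mem_D_insert_erase (blk : V → Fin n) (p : ℕ) {T : Finset V} {v u : V}
    (hT : ∀ i, (T.filter (fun x => blk x = i)).card = p)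
    (hvT : v ∈ T) (huT : u ∉ T) (hblk : blk u = blk v) :
    ∀ i, ((insert u (T.erase v)).filter (fun x => blk x = i)).card = p := by
  intro i
  have hvu : u ≠ v := fun h => huT (h ▸ hvT)
  rw [Finset.filter_insert, Finset.filter_erase]
  by_cases hi : blk u = i
  · rw [if_pos hi]
    have hvmem : v ∈ T.filter (fun x => blk x = i) := by
      rw [Finset.mem_filter]; exact ⟨hvT, by rw [← hblk, hi]⟩
    have humem : u ∉ (T.filter (fun x => blk x = i)).erase v := fun h =>
      huT (Finset.mem_of_mem_erase h |> fun h' => (Finset.mem_filter.mp h').1)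
    rw [Finset.card_insert_of_notMem humem, Finset.card_erase_of_mem hvmem, hT i]
    have : 1 ≤ p := by
      have := hT i; rw [← this]
      exact Finset.card_pos.mpr ⟨v, hvmem⟩
    omega
  · rw [if_neg hi]
    have : v ∉ T.filter (fun x => blk x = i) := by
      rw [Finset.mem_filter]; rintro ⟨-, hv⟩; exact hi (hblk.trans hv ▸ rfl)
    rw [Finset.erase_eq_of_notMem this, hT i]

lemma sum_Z_eq (blk : V → Fin n) (p q r : ℕ) (hr : r = p + q)
    (hblk : ∀ i : Fin n, (univ.filter (fun x => blk x = i)).card = r)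
    (v : V) (g : Finset V → ℝ) :
    ∑ T ∈ (univ.filter (fun T : Finset V =>
        ∀ i, (T.filter (fun x => blk x = i)).card = p)),
      (if v ∈ T then (q : ℝ) else -(p : ℝ)) * g T
    = ∑ T ∈ (univ.filter (fun T : Finset V =>
        ∀ i, (T.filter (fun x => blk x = i)).card = p)).filter (fun T => v ∈ T),
        ∑ u ∈ (univ.filter (fun x => blk x = blk v)) \ T,
          (g T - g (insert u (T.erase v))) := by
  set D : Finset (Finset V) :=
    univ.filter (fun T : Finset V => ∀ i, (T.filter (fun x => blk x = i)).card = p) with hD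
  set B : Finset V := univ.filter (fun x => blk x = blk v) with hB
  have hmemD : ∀ T, T ∈ D ↔ ∀ i, (T.filter (fun x => blk x = i)).card = p := by
    intro T; simp [hD]
  have hBT : ∀ T ∈ D, (B ∩ T).card = p := by
    intro T hT
    have : B ∩ T = T.filter (fun x => blk x = blk v) := by
      ext x; simp only [hB, Finset.mem_inter, Finset.mem_filter, Finset.mem_univ, true_and]
      tauto
    rw [this]; exact (hmemD T).mp hT (blk v)
  have hBTd : ∀ T ∈ D, (B \ T).card = q := by
    intro T hT
    have := Finset.card_sdiff_add_card_inter B T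
    rw [hBT T hT, hblk (blk v)] at this
    omega
  -- split LHS
  rw [← Finset.sum_filter_add_sum_filter_not D (fun T => v ∈ T)]
  have hL1 : ∑ T ∈ D.filter (fun T => v ∈ T), (if v ∈ T then (q : ℝ) else -(p : ℝ)) * g T
      = ∑ T ∈ D.filter (fun T => v ∈ T), (q : ℝ) * g T := by
    apply Finset.sum_congr rfl; intro T hT
    rw [if_pos (Finset.mem_filter.mp hT).2]
  have hL0 : ∑ T ∈ D.filter (fun T => ¬ v ∈ T), (if v ∈ T then (q : ℝ) else -(p : ℝ)) * g T
      = ∑ T ∈ D.filter (fun T => ¬ v ∈ T), -(p : ℝ) * g T := by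
    apply Finset.sum_congr rfl; intro T hT
    rw [if_neg (Finset.mem_filter.mp hT).2]
  rw [hL1, hL0]
  -- RHS split
  rw [Finset.sum_congr rfl (fun T (hT : T ∈ D.filter (fun T => v ∈ T)) =>
    Finset.sum_sub_distrib (s := B \ T) _ _)]
  rw [Finset.sum_sub_distrib]
  -- first part
  have hpart1 : ∑ T ∈ D.filter (fun T => v ∈ T), ∑ _u ∈ B \ T, g T
      = ∑ T ∈ D.filter (fun T => v ∈ T), (q : ℝ) * g T := by
    apply Finset.sum_congr rfl; intro T hT
    rw [Finset.sum_const, hBTd T (Finset.mem_filter.mp hT).1, nsmul_eq_mul]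
  -- second part via bijection
  have hpart2 : ∑ T ∈ D.filter (fun T => v ∈ T), ∑ u ∈ B \ T, g (insert u (T.erase v))
      = ∑ T ∈ D.filter (fun T => ¬ v ∈ T), (p : ℝ) * g T := by
    have e1 : ∑ x ∈ (D.filter (fun T => ¬ v ∈ T)).sigma (fun T => T ∩ B), g x.1
        = ∑ T ∈ D.filter (fun T => ¬ v ∈ T), (p : ℝ) * g T := by
      rw [Finset.sum_sigma]
      apply Finset.sum_congr rfl; intro T hT
      dsimp only
      rw [Finset.sum_const, nsmul_eq_mul, Finset.inter_comm,
        hBT T (Finset.mem_filter.mp hT).1]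
    rw [← Finset.sum_sigma ((D.filter (fun T => v ∈ T))) (fun T => B \ T)
      (fun x => g (insert x.2 (x.1.erase v))), ← e1]
    apply Finset.sum_nbij' (i := fun x => (⟨insert x.2 (x.1.erase v), x.2⟩ : Σ _ : Finset V, V))
      (j := fun x => (⟨insert v (x.1.erase x.2), x.2⟩ : Σ _ : Finset V, V))
    · rintro ⟨T, u⟩ hx
      rw [Finset.mem_sigma] at hx
      obtain ⟨hT, hu⟩ := hx
      rw [Finset.mem_filter] at hT
      rw [Finset.mem_sdiff] at hu
      have hub : blk u = blk v := by
        have := hu.1; rw [hB, Finset.mem_filter] at this; exact this.2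
      have huT : u ∉ T := hu.2
      have hvu : v ≠ u := fun h => huT (h ▸ hT.2)
      rw [Finset.mem_sigma]
      constructor
      · rw [Finset.mem_filter]
        refine ⟨(hmemD _).mpr (mem_D_insert_erase blk p ((hmemD T).mp hT.1) hT.2 huT hub), ?_⟩
        simp only [Finset.mem_insert, Finset.mem_erase]
        rintro (h | ⟨h, -⟩)
        exacts [hvu h, h rfl]
      · rw [Finset.mem_inter]
        exact ⟨Finset.mem_insert_self _ _, hu.1⟩
    · rintro ⟨T, w⟩ hx
      rw [Finset.mem_sigma] at hx
      obtain ⟨hT, hw⟩ := hx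
      rw [Finset.mem_filter] at hT
      rw [Finset.mem_inter] at hw
      have hwb : blk w = blk v := by
        have := hw.2; rw [hB, Finset.mem_filter] at this; exact this.2
      have hwv : w ≠ v := fun h => hT.2 (h ▸ hw.1)
      rw [Finset.mem_sigma]
      constructor
      · rw [Finset.mem_filter]
        refine ⟨(hmemD _).mpr (mem_D_insert_erase blk (v := w) (u := v) p
          ((hmemD T).mp hT.1) hw.1 hT.2 hwb.symm), Finset.mem_insert_self _ _⟩
      · rw [Finset.mem_sdiff]
        refine ⟨hw.2, ?_⟩
        simp only [Finset.mem_insert, Finset.mem_erase]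
        rintro (h | ⟨h, -⟩)
        exacts [hwv h, h rfl]
    · rintro ⟨T, u⟩ hx
      rw [Finset.mem_sigma] at hx
      obtain ⟨hT, hu⟩ := hx
      rw [Finset.mem_filter] at hT
      rw [Finset.mem_sdiff] at hu
      have huT' : u ∉ T.erase v := fun h => hu.2 (Finset.mem_of_mem_erase h)
      rw [Finset.erase_insert huT', Finset.insert_erase hT.2]
    · rintro ⟨T, w⟩ hx
      rw [Finset.mem_sigma] at hx
      obtain ⟨hT, hw⟩ := hx
      rw [Finset.mem_filter] at hT
      rw [Finset.mem_inter] at hw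
      have hvT' : v ∉ T.erase w := fun h => hT.2 (Finset.mem_of_mem_erase h)
      rw [Finset.erase_insert hvT', Finset.insert_erase hw.1]
    · rintro ⟨T, u⟩ _
      rfl
  rw [hpart1, hpart2]
  simp only [neg_mul, Finset.sum_neg_distrib, sub_eq_add_neg]

end Ident

section Count3
variable {V : Type*} [Fintype V] [DecidableEq V] {n : ℕ}

lemma count_sum (blk : V → Fin n) (p q r : ℕ) (hr : r = p + q)
    (hblk : ∀ i : Fin n, (univ.filter (fun x => blk x = i)).card = r)
    (v : V) (s : Finset V) (hs : ∀ u ∈ s, blk u = blk v ∧ u ≠ v) :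
    r * (r - 1) * ∑ T ∈ (univ.filter (fun T : Finset V =>
        ∀ i, (T.filter (fun x => blk x = i)).card = p)).filter (fun T => v ∈ T),
      (s \ T).card
    = s.card * ((univ.filter (fun T : Finset V =>
        ∀ i, (T.filter (fun x => blk x = i)).card = p)).card * (p * q)) := by
  set D : Finset (Finset V) :=
    univ.filter (fun T : Finset V => ∀ i, (T.filter (fun x => blk x = i)).card = p) with hD
  have hswap : ∑ T ∈ D.filter (fun T => v ∈ T), (s \ T).card
      = ∑ u ∈ s, (D.filter (fun T => v ∈ T ∧ u ∉ T)).card := by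
    have h1 : ∀ T : Finset V, (s \ T).card = ∑ u ∈ s, (if u ∉ T then 1 else 0) := by
      intro T
      rw [Finset.sdiff_eq_filter, Finset.card_filter]
    have h2 : ∀ u : V, (D.filter (fun T => v ∈ T ∧ u ∉ T)).card
        = ∑ T ∈ D.filter (fun T => v ∈ T), (if u ∉ T then 1 else 0) := by
      intro u
      rw [← Finset.filter_filter, Finset.card_filter]
    simp only [h1, h2]
    rw [Finset.sum_comm]
  rw [hswap, Finset.mul_sum]
  have : ∀ u ∈ s, r * (r - 1) * (D.filter (fun T => v ∈ T ∧ u ∉ T)).card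
      = D.card * (p * q) := by
    intro u hu
    exact pair_count blk p q r hr hblk (hs u hu).2.symm (hs u hu).1
  rw [Finset.sum_congr rfl this, Finset.sum_const, smul_eq_mul]

end Count3

/-- for a fixed partition `P` of `V(G)` into `n` blocks of size `r`
(encoded by `blk : V → Fin n`), with treatment assigning independently a
uniformly random `p`-subset of each block (equivalently, `T` uniform over all
subsets meeting every block in exactly `p` elements), if each `f_v` is
`K_v`-Lipschitz then
`|E[ξ]| ≤ (1/(n r (r−1))) Σ_v (|P_v ∩ N(v)|/d(v)) K_v`. -/
theorem stmt1
    {V : Type*} [Fintype V] [DecidableEq V]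
    (G : SimpleGraph V) [DecidableRel G.Adj]
    (p q r n : ℕ) (hp : 1 ≤ p) (hq : 1 ≤ q) (hr : r = p + q) (hn : 1 ≤ n)
    (hcard : Fintype.card V = r * n)
    (hNoIso : ∀ v : V, 0 < G.degree v)
    (blk : V → Fin n)
    (hblk : ∀ i : Fin n, (univ.filter (fun v => blk v = i)).card = r)
    (K : V → ℝ) (f : V → Finset V → ℝ) (hf0 : ∀ v, f v ∅ = 0)
    (hLip : ∀ v : V, ∀ A B : Finset V,
      A ⊆ G.neighborFinset v → B ⊆ G.neighborFinset v →
      |f v A - f v B| ≤ K v * (symmDiff A B).card / (G.degree v : ℝ)) :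
    let D : Finset (Finset V) :=
      univ.filter (fun T : Finset V =>
        ∀ i : Fin n, (T.filter (fun v => blk v = i)).card = p)
    let xi : Finset V → ℝ := fun T =>
      (1 / ((p : ℝ) * q * n)) *
        ∑ v, (if v ∈ T then (q : ℝ) else -(p : ℝ)) * f v (T ∩ G.neighborFinset v)
    |(∑ T ∈ D, xi T) / (D.card : ℝ)| ≤
      (1 / ((n : ℝ) * r * (r - 1))) *
        ∑ v, (((univ.filter (fun u => blk u = blk v)) ∩ G.neighborFinset v).card
            / (G.degree v : ℝ)) * K v := by
  intro D xi
  have hD : D = univ.filter (fun T : Finset V =>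
      ∀ i : Fin n, (T.filter (fun v => blk v = i)).card = p) := rfl
  have hxi : xi = fun T =>
      (1 / ((p : ℝ) * q * n)) *
        ∑ v, (if v ∈ T then (q : ℝ) else -(p : ℝ)) * f v (T ∩ G.neighborFinset v) := rfl
  have hr1 : 1 ≤ r := by omega
  have hr2 : 2 ≤ r := by omega
  have hdpos : ∀ v : V, (0 : ℝ) < (G.degree v : ℝ) := fun v => by
    exact_mod_cast hNoIso v
  have hrr1 : (0 : ℝ) < (r : ℝ) * ((r : ℝ) - 1) := by
    have : (2 : ℝ) ≤ (r : ℝ) := by exact_mod_cast hr2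
    nlinarith
  have hK : ∀ v, 0 ≤ K v := by
    intro v
    obtain ⟨w, hw⟩ : ∃ w, w ∈ G.neighborFinset v := by
      apply Finset.card_pos.mp
      rw [G.card_neighborFinset_eq_degree]
      exact hNoIso v
    have h := hLip v {w} ∅ (by simpa using hw) (by simp)
    have hsd : symmDiff ({w} : Finset V) ∅ = {w} := by simp
    rw [hsd, hf0] at h
    simp only [Finset.card_singleton, Nat.cast_one, sub_zero] at h
    have h0 : (0 : ℝ) ≤ K v * 1 / (G.degree v : ℝ) := le_trans (abs_nonneg _) h
    rw [mul_one] at h0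
    by_contra hneg
    push_neg at hneg
    have : K v / (G.degree v : ℝ) < 0 := div_neg_of_neg_of_pos hneg (hdpos v)
    linarith
  -- per-vertex bound
  have key : ∀ v : V,
      |∑ T ∈ D, (if v ∈ T then (q : ℝ) else -(p : ℝ)) * f v (T ∩ G.neighborFinset v)|
      ≤ (D.card : ℝ) * (((p : ℝ) * q) / ((r : ℝ) * ((r : ℝ) - 1)) *
          ((((univ.filter (fun u => blk u = blk v)) ∩ G.neighborFinset v).card : ℝ)
            / (G.degree v : ℝ) * K v)) := by
    intro v
    set N : Finset V := G.neighborFinset v with hN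
    set Bv : Finset V := univ.filter (fun u => blk u = blk v) with hBv
    have hvN : v ∉ N := by simp [hN]
    set D1 : Finset (Finset V) := D.filter (fun T => v ∈ T) with hD1
    have hid := sum_Z_eq blk p q r hr hblk v (fun T => f v (T ∩ N))
    rw [hD]
    rw [hid]
    set m : ℕ := ((Bv ∩ N).card) with hm
    set dv : ℝ := (G.degree v : ℝ) with hdv
    -- pointwise bound
    have hpt : ∀ T ∈ D1, ∀ u ∈ Bv \ T,
        |f v (T ∩ N) - f v ((insert u (T.erase v)) ∩ N)|
          ≤ (if u ∈ N then K v / dv else 0) := by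
      intro T hT u hu
      rw [Finset.mem_sdiff] at hu
      have hvT : v ∈ T := (Finset.mem_filter.mp hT).2
      have huT : u ∉ T := hu.2
      have hvu : v ≠ u := fun h => huT (h ▸ hvT)
      by_cases huN : u ∈ N
      · rw [if_pos huN]
        have hsd : symmDiff (T ∩ N) ((insert u (T.erase v)) ∩ N) = {u} := by
          ext x
          simp only [Finset.mem_symmDiff, Finset.mem_inter, Finset.mem_insert,
            Finset.mem_erase, Finset.mem_singleton]
          constructor
          · rintro (⟨⟨hxT, hxN⟩, hx2⟩ | ⟨⟨hx1, hxN⟩, hx2⟩)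
            · by_contra hxu
              exact hx2 ⟨Or.inr ⟨fun h => hvN (h ▸ hxN), hxT⟩, hxN⟩
            · rcases hx1 with rfl | ⟨hxv, hxT⟩
              · rfl
              · exact absurd ⟨hxT, hxN⟩ hx2
          · rintro rfl
            exact Or.inr ⟨⟨Or.inl rfl, huN⟩, fun h => huT h.1⟩
        have := hLip v (T ∩ N) ((insert u (T.erase v)) ∩ N)
          (Finset.inter_subset_right) (Finset.inter_subset_right)
        rw [hsd] at this
        simpa using this
      · rw [if_neg huN]
        have heq : T ∩ N = (insert u (T.erase v)) ∩ N := by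
          ext x
          simp only [Finset.mem_inter, Finset.mem_insert, Finset.mem_erase]
          constructor
          · rintro ⟨hxT, hxN⟩
            exact ⟨Or.inr ⟨fun h => hvN (h ▸ hxN), hxT⟩, hxN⟩
          · rintro ⟨hx, hxN⟩
            rcases hx with rfl | ⟨-, hxT⟩
            · exact absurd hxN huN
            · exact ⟨hxT, hxN⟩
        rw [heq, sub_self, abs_zero]
    have habs1 : |∑ T ∈ D1, ∑ u ∈ Bv \ T,
        (f v (T ∩ N) - f v ((insert u (T.erase v)) ∩ N))|
        ≤ ∑ T ∈ D1, ∑ u ∈ Bv \ T, (if u ∈ N then K v / dv else 0) := by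
      refine (Finset.abs_sum_le_sum_abs _ _).trans ?_
      refine Finset.sum_le_sum fun T hT => ?_
      refine (Finset.abs_sum_le_sum_abs _ _).trans ?_
      exact Finset.sum_le_sum fun u hu => hpt T hT u hu
    refine habs1.trans ?_
    -- compute the bound sum
    have hsum2 : ∀ T ∈ D1, ∑ u ∈ Bv \ T, (if u ∈ N then K v / dv else 0)
        = (((Bv ∩ N) \ T).card : ℝ) * (K v / dv) := by
      intro T _
      rw [← Finset.sum_filter]
      have : (Bv \ T).filter (fun u => u ∈ N) = (Bv ∩ N) \ T := by
        ext x
        simp only [Finset.mem_filter, Finset.mem_sdiff, Finset.mem_inter]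
        tauto
      rw [this, Finset.sum_const, nsmul_eq_mul]
    rw [Finset.sum_congr rfl hsum2, ← Finset.sum_mul]
    have hcast : ∑ T ∈ D1, (((Bv ∩ N) \ T).card : ℝ)
        = ((∑ T ∈ D1, ((Bv ∩ N) \ T).card : ℕ) : ℝ) := by push_cast; rfl
    rw [hcast]
    -- counting
    have hs : ∀ u ∈ Bv ∩ N, blk u = blk v ∧ u ≠ v := by
      intro u hu
      rw [Finset.mem_inter] at hu
      have h1 : blk u = blk v := by
        have := hu.1; rw [hBv, Finset.mem_filter] at this; exact this.2
      have h2 : G.Adj v u := by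
        have := hu.2; rw [hN, SimpleGraph.mem_neighborFinset] at this; exact this
      exact ⟨h1, h2.ne'⟩
    have hcount := count_sum blk p q r hr hblk v (Bv ∩ N) hs
    have hcount' : ((r : ℝ) * ((r : ℝ) - 1)) * ((∑ T ∈ D1, ((Bv ∩ N) \ T).card : ℕ) : ℝ)
        = (m : ℝ) * ((D.card : ℝ) * ((p : ℝ) * q)) := by
      have h := congrArg (Nat.cast : ℕ → ℝ) hcount
      push_cast [Nat.cast_sub hr1] at h ⊢
      rw [hD1, hm]
      push_cast
      linear_combination h
    have hM : ((∑ T ∈ D1, ((Bv ∩ N) \ T).card : ℕ) : ℝ)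
        = (m : ℝ) * ((D.card : ℝ) * ((p : ℝ) * q)) / ((r : ℝ) * ((r : ℝ) - 1)) := by
      rw [eq_div_iff (ne_of_gt hrr1)]
      linear_combination hcount'
    rw [hM]
    apply le_of_eq
    field_simp
    ring
  -- assemble
  have hsplit : ∑ T ∈ D, xi T = (1 / ((p : ℝ) * q * n)) *
      ∑ v : V, ∑ T ∈ D, (if v ∈ T then (q : ℝ) else -(p : ℝ)) * f v (T ∩ G.neighborFinset v) := by
    simp only [hxi]
    rw [← Finset.mul_sum, Finset.sum_comm]
  have hc : (0 : ℝ) < (p : ℝ) * q * n := by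
    have hp' : (0:ℝ) < (p:ℝ) := by exact_mod_cast hp
    have hq' : (0:ℝ) < (q:ℝ) := by exact_mod_cast hq
    have hn' : (0:ℝ) < (n:ℝ) := by exact_mod_cast hn
    exact mul_pos (mul_pos hp' hq') hn' 
  have habs : |∑ T ∈ D, xi T| ≤ (D.card : ℝ) *
      ((1 / ((n : ℝ) * r * ((r:ℝ) - 1))) *
        ∑ v, (((univ.filter (fun u => blk u = blk v)) ∩ G.neighborFinset v).card
            / (G.degree v : ℝ)) * K v) := by
    rw [hsplit, abs_mul, abs_of_pos (one_div_pos.mpr hc)]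
    have h1 : |∑ v : V, ∑ T ∈ D, (if v ∈ T then (q : ℝ) else -(p : ℝ)) *
        f v (T ∩ G.neighborFinset v)|
        ≤ ∑ v : V, (D.card : ℝ) * (((p : ℝ) * q) / ((r : ℝ) * ((r : ℝ) - 1)) *
          ((((univ.filter (fun u => blk u = blk v)) ∩ G.neighborFinset v).card : ℝ)
            / (G.degree v : ℝ) * K v)) :=
      (Finset.abs_sum_le_sum_abs _ _).trans (Finset.sum_le_sum fun v _ => key v)
    refine (mul_le_mul_of_nonneg_left h1 (le_of_lt (one_div_pos.mpr hc))).trans (le_of_eq ?_)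
    have hpull : ∑ v : V, ((D.card : ℝ) * (((p : ℝ) * q) / ((r : ℝ) * ((r : ℝ) - 1)) *
          ((((univ.filter (fun u => blk u = blk v)) ∩ G.neighborFinset v).card : ℝ)
            / (G.degree v : ℝ) * K v)))
        = ((D.card : ℝ) * (((p : ℝ) * q) / ((r : ℝ) * ((r : ℝ) - 1)))) *
          ∑ v : V, ((((univ.filter (fun u => blk u = blk v)) ∩ G.neighborFinset v).card : ℝ)
            / (G.degree v : ℝ) * K v) := by
      rw [Finset.mul_sum]
      exact Finset.sum_congr rfl fun v _ => by ring
    rw [hpull]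
    have hp0 : (p:ℝ) ≠ 0 := Nat.cast_ne_zero.mpr (by omega)
    have hq0 : (q:ℝ) ≠ 0 := Nat.cast_ne_zero.mpr (by omega)
    have hn0 : (n:ℝ) ≠ 0 := Nat.cast_ne_zero.mpr (by omega)
    have hr0 : (r:ℝ) ≠ 0 := Nat.cast_ne_zero.mpr (by omega)
    have hr10 : ((r:ℝ) - 1) ≠ 0 := by
      have : (2:ℝ) ≤ (r:ℝ) := by exact_mod_cast hr2
      intro h; linarith
    rw [show ∀ Dc S : ℝ, 1 / ((p:ℝ) * q * n) * (Dc * ((p:ℝ) * q / ((r:ℝ) * ((r:ℝ) - 1))) * S)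
        = Dc * (((p:ℝ) * q) / ((p:ℝ) * q) * (1 / ((n:ℝ) * r * ((r:ℝ) - 1)))) * S from
        fun Dc S => by simp only [one_div, div_eq_mul_inv, mul_inv]; ring, div_self (mul_ne_zero hp0 hq0)]
    ring
  rcases Nat.eq_zero_or_pos D.card with h0 | hpos
  · rw [h0]
    simp only [Nat.cast_zero, div_zero, abs_zero]
    have hnrr : (0:ℝ) < (n:ℝ) * r * ((r:ℝ) - 1) := by
      have hn' : (0:ℝ) < (n:ℝ) := by exact_mod_cast hn
      nlinarith [hrr1]
    apply mul_nonneg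
    · exact le_of_lt (one_div_pos.mpr hnrr)
    · apply Finset.sum_nonneg
      intro v _
      apply mul_nonneg _ (hK v)
      positivity
  · have hpos' : (0 : ℝ) < (D.card : ℝ) := by exact_mod_cast hpos
    rw [abs_div, abs_of_pos hpos', div_le_iff₀ hpos']
    calc |∑ T ∈ D, xi T| ≤ _ := habs
      _ = _ := by ring
end

section
/- If every block S_i of the fixed partition P is an independent set in G (i.e., no edge of G has both endpoints in the same block), and treatment is assigned by treating a uniformly random p-subset of each block independently, then the Neymanian estimator is unbiased: E_T[t̂_Neyman] = t̄. -/
open Finset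

private lemma card_insert_erase' {V : Type*} [DecidableEq V] {s : Finset V} {v w : V}
    (hv : v ∈ s) (hw : w ∉ s) : (insert w (s.erase v)).card = s.card := by
  rw [card_insert_of_notMem (fun h => hw (mem_of_mem_erase h)),
    card_erase_of_mem hv, Nat.sub_add_cancel (card_pos.2 ⟨v, hv⟩)]

set_option maxHeartbeats 1000000 in
private lemma key_lemma {V : Type*} [Fintype V] [DecidableEq V] {n p q : ℕ}
    (blk : V → Fin n) (v : V) (C : Finset V)
    (hC : ∀ w ∈ C, blk w ≠ blk v)
    (hB : (univ.filter (fun w => blk w = blk v)).card = p + q)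
    (g : Finset V → ℝ) :
    (q : ℝ) * ∑ T ∈ (univ.filter (fun T : Finset V =>
        ∀ i : Fin n, (T.filter (fun w => blk w = i)).card = p)).filter (fun T => v ∈ T),
        g (T ∩ C) =
    (p : ℝ) * ∑ T ∈ (univ.filter (fun T : Finset V =>
        ∀ i : Fin n, (T.filter (fun w => blk w = i)).card = p)).filter (fun T => v ∉ T),
        g (T ∩ C) := by
  classical
  set B : Finset V := univ.filter (fun w => blk w = blk v) with hBdef
  set D : Finset (Finset V) := univ.filter (fun T : Finset V =>
      ∀ i : Fin n, (T.filter (fun w => blk w = i)).card = p) with hD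
  have hDmem : ∀ T : Finset V, T ∈ D ↔
      ∀ i : Fin n, (T.filter (fun w => blk w = i)).card = p := by
    intro T; simp [hD]
  have hBT : ∀ T ∈ D, (B ∩ T).card = p := by
    intro T hT
    have h := (hDmem T).1 hT (blk v)
    rw [← h]; congr 1
    ext w; simp [hBdef, and_comm]
  have hvC : v ∉ C := fun h => hC v h rfl
  have hBsd : ∀ T ∈ D, (B \ T).card = q := by
    intro T hT
    have h1 : (B \ T).card + (B ∩ T).card = B.card := card_sdiff_add_card_inter B T
    rw [hBT T hT, hB] at h1; omega
  calc (q : ℝ) * ∑ T ∈ D.filter (fun T => v ∈ T), g (T ∩ C)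
      = ∑ T ∈ D.filter (fun T => v ∈ T), ∑ w ∈ B \ T, g (T ∩ C) := by
        rw [mul_sum]
        refine sum_congr rfl fun T hT => ?_
        rw [sum_const, nsmul_eq_mul, hBsd T (mem_of_mem_filter T hT)]
    _ = ∑ a ∈ (D.filter (fun T => v ∈ T)).sigma (fun T => B \ T), g (a.1 ∩ C) :=
        sum_sigma' _ _ _
    _ = ∑ a ∈ (D.filter (fun T => v ∉ T)).sigma (fun T => B ∩ T), g (a.1 ∩ C) := by
        refine sum_nbij' (fun a => ⟨insert a.2 (a.1.erase v), a.2⟩)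
          (fun b => ⟨insert v (b.1.erase b.2), b.2⟩) ?_ ?_ ?_ ?_ ?_
        · rintro ⟨T, w⟩ ha
          simp only [mem_sigma, mem_filter, mem_sdiff] at ha
          obtain ⟨⟨hTD, hvT⟩, hwB, hwT⟩ := ha
          have hwv : blk w = blk v := by simpa [hBdef] using hwB
          have hvnew : v ∉ insert w (T.erase v) := by
            intro h
            rcases mem_insert.1 h with rfl | h2
            · exact hwT hvT
            · exact (mem_erase.1 h2).1 rfl
          refine mem_sigma.2 ⟨mem_filter.2 ⟨(hDmem _).2 ?_, hvnew⟩,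
            mem_inter.2 ⟨hwB, mem_insert_self _ _⟩⟩
          rw [hDmem] at hTD
          intro i
          by_cases hi : i = blk v
          · subst hi
            rw [filter_insert, if_pos hwv, filter_erase]
            have hvf : v ∈ T.filter (fun u => blk u = blk v) := mem_filter.2 ⟨hvT, rfl⟩
            have hwf : w ∉ T.filter (fun u => blk u = blk v) :=
              fun h => hwT (mem_of_mem_filter _ h)
            rw [card_insert_erase' hvf hwf, hTD (blk v)]
          · have hfil : (insert w (T.erase v)).filter (fun u => blk u = i) =
                T.filter (fun u => blk u = i) := by
              ext u
              simp only [mem_filter, mem_insert, mem_erase]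
              constructor
              · rintro ⟨rfl | ⟨_, hu⟩, h2⟩
                · exact absurd (hwv.symm.trans h2).symm hi
                · exact ⟨hu, h2⟩
              · rintro ⟨h1, h2⟩
                exact ⟨Or.inr ⟨fun h => hi ((h ▸ h2 : blk v = i)).symm, h1⟩, h2⟩
            rw [hfil, hTD i]
        · rintro ⟨T, w⟩ hb
          simp only [mem_sigma, mem_filter, mem_inter] at hb
          obtain ⟨⟨hTD, hvT⟩, hwB, hwT⟩ := hb
          have hwv : blk w = blk v := by simpa [hBdef] using hwB
          have hwnew : w ∉ insert v (T.erase w) := by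
            intro h
            rcases mem_insert.1 h with rfl | h2
            · exact hvT hwT
            · exact (mem_erase.1 h2).1 rfl
          refine mem_sigma.2 ⟨mem_filter.2 ⟨(hDmem _).2 ?_, mem_insert_self _ _⟩,
            mem_sdiff.2 ⟨hwB, hwnew⟩⟩
          rw [hDmem] at hTD
          intro i
          by_cases hi : i = blk v
          · subst hi
            rw [filter_insert, if_pos rfl, filter_erase]
            have hwf : w ∈ T.filter (fun u => blk u = blk v) := mem_filter.2 ⟨hwT, hwv⟩
            have hvf : v ∉ T.filter (fun u => blk u = blk v) :=
              fun h => hvT (mem_of_mem_filter _ h)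
            rw [card_insert_erase' hwf hvf, hTD (blk v)]
          · have hfil : (insert v (T.erase w)).filter (fun u => blk u = i) =
                T.filter (fun u => blk u = i) := by
              ext u
              simp only [mem_filter, mem_insert, mem_erase]
              constructor
              · rintro ⟨rfl | ⟨_, hu⟩, h2⟩
                · exact absurd h2.symm hi
                · exact ⟨hu, h2⟩
              · rintro ⟨h1, h2⟩
                exact ⟨Or.inr ⟨fun h => hi ((hwv.symm.trans (h ▸ h2)).symm ▸ rfl), h1⟩, h2⟩
            rw [hfil, hTD i]
        · rintro ⟨T, w⟩ ha
          simp only [mem_sigma, mem_filter, mem_sdiff] at ha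
          obtain ⟨⟨hTD, hvT⟩, hwB, hwT⟩ := ha
          have h1 : w ∉ T.erase v := fun h => hwT (mem_of_mem_erase h)
          simp only [erase_insert h1, insert_erase hvT]
        · rintro ⟨T, w⟩ hb
          simp only [mem_sigma, mem_filter, mem_inter] at hb
          obtain ⟨⟨hTD, hvT⟩, hwB, hwT⟩ := hb
          have h1 : v ∉ T.erase w := fun h => hvT (mem_of_mem_erase h)
          simp only [erase_insert h1, insert_erase hwT]
        · rintro ⟨T, w⟩ ha
          simp only [mem_sigma, mem_filter, mem_sdiff] at ha
          obtain ⟨⟨hTD, hvT⟩, hwB, hwT⟩ := ha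
          have hwC : w ∉ C := fun h => hC w h (by simpa [hBdef] using hwB)
          have hEq : insert w (T.erase v) ∩ C = T ∩ C := by
            ext u
            constructor
            · intro hu
              obtain ⟨h1, h2⟩ := mem_inter.1 hu
              rcases mem_insert.1 h1 with rfl | h3
              · exact absurd h2 hwC
              · exact mem_inter.2 ⟨mem_of_mem_erase h3, h2⟩
            · intro hu
              obtain ⟨h1, h2⟩ := mem_inter.1 hu
              exact mem_inter.2
                ⟨mem_insert_of_mem (mem_erase.2 ⟨fun h => hvC (h ▸ h2), h1⟩), h2⟩
          simp only [hEq]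
    _ = ∑ T ∈ D.filter (fun T => v ∉ T), ∑ w ∈ B ∩ T, g (T ∩ C) :=
        (sum_sigma' (D.filter (fun T => v ∉ T)) (fun T => B ∩ T)
          (fun T _ => g (T ∩ C))).symm
    _ = (p : ℝ) * ∑ T ∈ D.filter (fun T => v ∉ T), g (T ∩ C) := by
        rw [mul_sum]
        refine sum_congr rfl fun T hT => ?_
        rw [sum_const, nsmul_eq_mul, hBT T (mem_of_mem_filter T hT)]

set_option maxHeartbeats 1000000 in
/-- if every block of the fixed partition is an independent set of
`G`, and treatment treats a uniformly random `p`-subset of each block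
independently (equivalently, `T` uniform over all subsets meeting every block in
exactly `p` elements), then the Neymanian estimator is unbiased:
`E_T[t̂_Neyman] = t̄`. -/
theorem stmt2
    {V : Type*} [Fintype V] [DecidableEq V]
    (G : SimpleGraph V) [DecidableRel G.Adj]
    (p q r n : ℕ) (hp : 1 ≤ p) (hq : 1 ≤ q) (hr : r = p + q) (hn : 1 ≤ n)
    (hcard : Fintype.card V = r * n)
    (hNoIso : ∀ v : V, 0 < G.degree v)
    (blk : V → Fin n)
    (hblk : ∀ i : Fin n, (univ.filter (fun v => blk v = i)).card = r)
    (hindep : ∀ v v' : V, blk v = blk v' → ¬ G.Adj v v')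
    (x t : V → ℝ) (K : V → ℝ) (f : V → Finset V → ℝ) (hf0 : ∀ v, f v ∅ = 0)
    (hLip : ∀ v : V, ∀ A B : Finset V,
      A ⊆ G.neighborFinset v → B ⊆ G.neighborFinset v →
      |f v A - f v B| ≤ K v * (symmDiff A B).card / (G.degree v : ℝ)) :
    let D : Finset (Finset V) :=
      univ.filter (fun T : Finset V =>
        ∀ i : Fin n, (T.filter (fun v => blk v = i)).card = p)
    let tNeyman : Finset V → ℝ := fun T =>
      (1 / ((p : ℝ) * q * n)) *
        ∑ v, (if v ∈ T then (q : ℝ) else -(p : ℝ)) *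
          (x v + (if v ∈ T then t v else 0) + f v (T ∩ G.neighborFinset v))
    (∑ T ∈ D, tNeyman T) / (D.card : ℝ) = (1 / ((r : ℝ) * n)) * ∑ v, t v := by
  classical
  intro D tNeyman
  have hDdef : D = univ.filter (fun T : Finset V =>
      ∀ i : Fin n, (T.filter (fun w => blk w = i)).card = p) := rfl
  have hB : ∀ v : V, (univ.filter (fun w => blk w = blk v)).card = p + q := by
    intro v; rw [← hr]; exact hblk (blk v)
  -- nonemptiness of D
  have hDne : D.Nonempty := by
    have hex : ∀ i : Fin n, ∃ s ⊆ univ.filter (fun v => blk v = i), s.card = p := by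
      intro i
      exact exists_subset_card_eq (by rw [hblk i]; omega)
    choose s hs hscard using hex
    refine ⟨univ.filter (fun v => v ∈ s (blk v)), ?_⟩
    rw [hDdef, mem_filter]
    refine ⟨mem_univ _, fun i => ?_⟩
    have : (univ.filter (fun v => v ∈ s (blk v))).filter (fun w => blk w = i) = s i := by
      ext w
      simp only [mem_filter, mem_univ, true_and]
      constructor
      · rintro ⟨h1, rfl⟩; exact h1
      · intro h
        have hw : blk w = i := (mem_filter.1 (hs i h)).2
        exact ⟨hw ▸ h, hw⟩
    rw [this, hscard i]
  have hD0 : (D.card : ℝ) ≠ 0 := by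
    exact Nat.cast_ne_zero.2 (card_pos.2 hDne).ne'
  have hr0 : (r : ℝ) ≠ 0 := Nat.cast_ne_zero.2 (by omega)
  have hNr : ∀ v : V, (r : ℝ) * ((D.filter (fun T => v ∈ T)).card : ℝ)
      = (p : ℝ) * D.card := by
    intro v
    have hk := key_lemma (q := q) blk v ∅ (fun w hw => absurd hw (notMem_empty w))
      (hB v) (fun _ => (1 : ℝ))
    rw [← hDdef] at hk
    simp only [sum_const, nsmul_eq_mul, mul_one] at hk
    have hsplit : (D.filter (fun T => v ∈ T)).card
        + (D.filter (fun T => ¬ v ∈ T)).card = D.card :=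
      card_filter_add_card_filter_not _
    have hrc : (r : ℝ) = (p : ℝ) + q := by exact_mod_cast hr
    have hc : ((D.filter (fun T => v ∈ T)).card : ℝ)
        + ((D.filter (fun T => ¬ v ∈ T)).card : ℝ) = (D.card : ℝ) := by
      exact_mod_cast hsplit
    set N : ℝ := ((D.filter (fun T => v ∈ T)).card : ℝ)
    set M : ℝ := ((D.filter (fun T => ¬ v ∈ T)).card : ℝ)
    calc (r : ℝ) * N = (p : ℝ) * N + (q : ℝ) * N := by rw [hrc]; ring
      _ = (p : ℝ) * N + (p : ℝ) * M := by rw [hk]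
      _ = (p : ℝ) * (N + M) := by ring
      _ = (p : ℝ) * D.card := by rw [hc]
  have hkey2 : ∀ v : V,
      (q : ℝ) * ∑ T ∈ D.filter (fun T => v ∈ T), (x v + f v (T ∩ G.neighborFinset v))
      = (p : ℝ) * ∑ T ∈ D.filter (fun T => ¬ v ∈ T),
          (x v + f v (T ∩ G.neighborFinset v)) := by
    intro v
    have hC : ∀ w ∈ G.neighborFinset v, blk w ≠ blk v := by
      intro w hw h
      exact hindep v w h.symm ((SimpleGraph.mem_neighborFinset G v w).1 hw)
    have hk := key_lemma blk v (G.neighborFinset v) hC (hB v) (fun A => x v + f v A)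
    rw [← hDdef] at hk
    exact hk
  have hv0 : ∀ v : V, (∑ T ∈ D, (if v ∈ T then (q : ℝ) else -(p : ℝ)) *
      (x v + (if v ∈ T then t v else 0) + f v (T ∩ G.neighborFinset v)))
      = (q : ℝ) * ((D.filter (fun T => v ∈ T)).card : ℝ) * t v := by
    intro v
    rw [← sum_filter_add_sum_filter_not D (fun T => v ∈ T)]
    have h1 : ∑ T ∈ D.filter (fun T => v ∈ T), (if v ∈ T then (q : ℝ) else -(p : ℝ)) *
        (x v + (if v ∈ T then t v else 0) + f v (T ∩ G.neighborFinset v))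
        = ∑ T ∈ D.filter (fun T => v ∈ T),
            ((q : ℝ) * (x v + f v (T ∩ G.neighborFinset v)) + (q : ℝ) * t v) := by
      refine sum_congr rfl fun T hT => ?_
      have hvT : v ∈ T := (mem_filter.1 hT).2
      rw [if_pos hvT, if_pos hvT]; ring
    have h2 : ∑ T ∈ D.filter (fun T => ¬ v ∈ T), (if v ∈ T then (q : ℝ) else -(p : ℝ)) *
        (x v + (if v ∈ T then t v else 0) + f v (T ∩ G.neighborFinset v))
        = ∑ T ∈ D.filter (fun T => ¬ v ∈ T),
            (-((p : ℝ) * (x v + f v (T ∩ G.neighborFinset v)))) := by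
      refine sum_congr rfl fun T hT => ?_
      have hvT : v ∉ T := (mem_filter.1 hT).2
      rw [if_neg hvT, if_neg hvT]; ring
    rw [h1, h2, sum_add_distrib, sum_const, nsmul_eq_mul, ← mul_sum, hkey2 v,
      Finset.sum_neg_distrib, ← mul_sum]
    ring
  have htN : tNeyman = fun T => (1 / ((p : ℝ) * q * n)) *
      ∑ v, (if v ∈ T then (q : ℝ) else -(p : ℝ)) *
        (x v + (if v ∈ T then t v else 0) + f v (T ∩ G.neighborFinset v)) := rfl
  have hp0 : (p : ℝ) ≠ 0 := Nat.cast_ne_zero.2 (by omega)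
  have hq0 : (q : ℝ) ≠ 0 := Nat.cast_ne_zero.2 (by omega)
  have hn0 : (n : ℝ) ≠ 0 := Nat.cast_ne_zero.2 (by omega)
  have hsum : ∑ T ∈ D, tNeyman T
      = (D.card : ℝ) * ((1 / ((r : ℝ) * n)) * ∑ v, t v) := by
    rw [htN, ← mul_sum, sum_comm]
    rw [sum_congr rfl fun v _ => hv0 v]
    have h3 : ∀ v : V, (q : ℝ) * ((D.filter (fun T => v ∈ T)).card : ℝ) * t v
        = (q : ℝ) * ((p : ℝ) * D.card / r) * t v := by
      intro v
      have hN : ((D.filter (fun T => v ∈ T)).card : ℝ) = (p : ℝ) * D.card / r := by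
        rw [eq_div_iff hr0]; linarith [hNr v]
      rw [hN]
    rw [sum_congr rfl fun v _ => h3 v, ← mul_sum]
    field_simp
  rw [hsum, mul_div_cancel_left₀ _ hD0]
end

section
/- When the treatment group T is sampled uniformly at random from all pn-element subsets of V(G) (completely randomized design), |E_T[ξ]| ≤ K̄/(rn − 1), where K̄ = (1/(rn)) Σ_v K_v. -/
open Finset

lemma swap_sum' {V : Type*} [Fintype V] [DecidableEq V] (m : ℕ) (v : V)
    (g : Finset V → ℝ) :
    ∑ T ∈ (powersetCard m (univ : Finset V)).filter (fun T => v ∉ T), ∑ _u ∈ T, g T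
    = ∑ T ∈ (powersetCard m (univ : Finset V)).filter (fun T => v ∈ T),
        ∑ u ∈ Tᶜ, g (insert u (T.erase v)) := by
  rw [Finset.sum_sigma', Finset.sum_sigma']
  refine Finset.sum_nbij' (fun x => ⟨insert v (x.1.erase x.2), x.2⟩)
    (fun x => ⟨insert x.2 (x.1.erase v), x.2⟩) ?_ ?_ ?_ ?_ ?_
  · rintro ⟨T, u⟩ hx
    simp only [Finset.mem_sigma, Finset.mem_filter, Finset.mem_powersetCard_univ] at hx ⊢
    obtain ⟨⟨hcard, hv⟩, hu⟩ := hx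
    have hne : v ≠ u := fun h => hv (h ▸ hu)
    have hvnotmem : v ∉ T.erase u := fun h => hv (Finset.mem_of_mem_erase h)
    refine ⟨⟨?_, Finset.mem_insert_self _ _⟩, ?_⟩
    · rw [Finset.card_insert_of_notMem hvnotmem, Finset.card_erase_of_mem hu]
      have : 1 ≤ T.card := Finset.card_pos.mpr ⟨u, hu⟩
      omega
    · rw [Finset.mem_compl]
      simp only [Finset.mem_insert, Finset.mem_erase]
      push_neg
      exact ⟨fun h => hne h.symm, fun h => absurd rfl h⟩
  · rintro ⟨T, u⟩ hx
    simp only [Finset.mem_sigma, Finset.mem_filter, Finset.mem_powersetCard_univ,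
      Finset.mem_compl] at hx ⊢
    obtain ⟨⟨hcard, hv⟩, hu⟩ := hx
    have hne : u ≠ v := fun h => hu (h ▸ hv)
    have hunotmem : u ∉ T.erase v := fun h => hu (Finset.mem_of_mem_erase h)
    refine ⟨⟨?_, ?_⟩, Finset.mem_insert_self _ _⟩
    · rw [Finset.card_insert_of_notMem hunotmem, Finset.card_erase_of_mem hv]
      have : 1 ≤ T.card := Finset.card_pos.mpr ⟨v, hv⟩
      omega
    · simp only [Finset.mem_insert, Finset.mem_erase]
      push_neg
      exact ⟨fun h => hne h.symm, fun h => absurd rfl h⟩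
  · rintro ⟨T, u⟩ hx
    simp only [Finset.mem_sigma, Finset.mem_filter, Finset.mem_powersetCard_univ] at hx
    obtain ⟨⟨hcard, hv⟩, hu⟩ := hx
    have hvnotmem : v ∉ T.erase u := fun h => hv (Finset.mem_of_mem_erase h)
    have hTeq : insert u ((insert v (T.erase u)).erase v) = T := by
      rw [Finset.erase_insert hvnotmem, Finset.insert_erase hu]
    exact congrArg (fun s => (⟨s, u⟩ : Σ _ : Finset V, V)) hTeq
  · rintro ⟨T, u⟩ hx
    simp only [Finset.mem_sigma, Finset.mem_filter, Finset.mem_powersetCard_univ,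
      Finset.mem_compl] at hx
    obtain ⟨⟨hcard, hv⟩, hu⟩ := hx
    have hunotmem : u ∉ T.erase v := fun h => hu (Finset.mem_of_mem_erase h)
    have hTeq : insert v ((insert u (T.erase v)).erase u) = T := by
      rw [Finset.erase_insert hunotmem, Finset.insert_erase hv]
    exact congrArg (fun s => (⟨s, u⟩ : Σ _ : Finset V, V)) hTeq
  · rintro ⟨T, u⟩ hx
    simp only [Finset.mem_sigma, Finset.mem_filter, Finset.mem_powersetCard_univ] at hx
    obtain ⟨⟨hcard, hv⟩, hu⟩ := hx
    have hvnotmem : v ∉ T.erase u := fun h => hv (Finset.mem_of_mem_erase h)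
    simp only
    rw [Finset.erase_insert hvnotmem, Finset.insert_erase hu]

lemma count_lemma' {V : Type*} [Fintype V] [DecidableEq V] (m : ℕ) (hm : 1 ≤ m)
    (v w : V) (hvw : v ≠ w) :
    ((powersetCard m (univ : Finset V)).filter (fun T => v ∈ T ∧ w ∉ T)).card
      = (Fintype.card V - 2).choose (m - 1) := by
  have hmain : ((powersetCard m (univ : Finset V)).filter (fun T => v ∈ T ∧ w ∉ T)).card
      = (powersetCard (m-1) ((univ.erase v).erase w)).card := by
    apply Finset.card_nbij' (fun T => T.erase v) (fun S => insert v S)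
    · intro T hT
      simp only [Finset.mem_coe, Finset.mem_filter, Finset.mem_powersetCard_univ] at hT
      obtain ⟨hcard, hv, hw⟩ := hT
      rw [Finset.mem_coe, Finset.mem_powersetCard]
      constructor
      · intro x hx
        simp only [Finset.mem_erase] at hx ⊢
        exact ⟨fun h => hw (h ▸ hx.2), hx.1, Finset.mem_univ x⟩
      · rw [Finset.card_erase_of_mem hv, hcard]
    · intro S hS
      rw [Finset.mem_coe, Finset.mem_powersetCard] at hS
      obtain ⟨hsub, hcard⟩ := hS
      have hvS : v ∉ S := fun h => by
        have := hsub h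
        simp only [Finset.mem_erase] at this
        exact this.2.1 rfl
      have hwS : w ∉ S := fun h => by
        have := hsub h
        simp only [Finset.mem_erase] at this
        exact this.1 rfl
      simp only [Finset.mem_coe, Finset.mem_filter, Finset.mem_powersetCard_univ]
      refine ⟨?_, Finset.mem_insert_self _ _, ?_⟩
      · rw [Finset.card_insert_of_notMem hvS, hcard]; omega
      · simp only [Finset.mem_insert]
        push_neg
        exact ⟨fun h => hvw h.symm, hwS⟩
    · intro T hT
      simp only [Finset.mem_coe, Finset.mem_filter] at hT
      exact Finset.insert_erase hT.2.1
    · intro S hS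
      rw [Finset.mem_coe, Finset.mem_powersetCard] at hS
      have hvS : v ∉ S := fun h => by
        have := hS.1 h
        simp only [Finset.mem_erase] at this
        exact this.2.1 rfl
      exact Finset.erase_insert hvS
  rw [hmain, Finset.card_powersetCard]
  congr 1
  rw [Finset.card_erase_of_mem, Finset.card_erase_of_mem (Finset.mem_univ v), Finset.card_univ]
  · omega
  · simp [Finset.mem_erase, hvw.symm]

lemma choose_id' (N m : ℕ) (hm : 1 ≤ m) (hmN : m < N) :
    m * (N - m) * N.choose m = N * (N - 1) * (N - 2).choose (m - 1) := by
  obtain ⟨a, rfl⟩ : ∃ a, m = a + 1 := ⟨m - 1, by omega⟩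
  obtain ⟨b, rfl⟩ : ∃ b, N = a + 1 + b + 1 := ⟨N - a - 2, by omega⟩
  simp only [Nat.add_sub_cancel, show a + 1 + b + 1 - (a + 1) = b + 1 by omega,
    show a + 1 + b + 1 - 1 = a + b + 1 by omega, show a + 1 + b + 1 - 2 = a + b by omega]
  have h1 := Nat.add_one_mul_choose_eq (a + b + 1) a
  have h2 := Nat.add_one_mul_choose_eq (a + b) b
  have h3 : (a + b + 1).choose a = (a + b + 1).choose (b + 1) := by
    rw [← Nat.choose_symm (by omega : b + 1 ≤ a + b + 1)]
    congr 1; omega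
  have h4 : (a + b).choose b = (a + b).choose a := by
    rw [← Nat.choose_symm (by omega : a ≤ a + b)]
    congr 1; omega
  rw [show a + b + 1 + 1 = a + b + 2 from rfl] at h1
  rw [show a + 1 + b + 1 = a + b + 2 from by omega]
  zify at h1 h2 h3 h4 ⊢
  linear_combination (-((b:ℤ)+1)) * h1 - ((a:ℤ)+b+2) * h2 + ((b:ℤ)+1)*((a:ℤ)+b+2) * h3 + ((a:ℤ)+b+2)*((a:ℤ)+b+1) * h4

lemma pervertex {V : Type*} [Fintype V] [DecidableEq V] (G : SimpleGraph V) [DecidableRel G.Adj]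
    (m : ℕ) (hm : 1 ≤ m)
    (a b : ℝ) (ha : 0 ≤ a)
    (hab : a * m = b * ((Fintype.card V - m : ℕ) : ℝ))
    (v : V) (hd : 0 < G.degree v) (Kv : ℝ) (fv : Finset V → ℝ)
    (hLip : ∀ A B : Finset V, A ⊆ G.neighborFinset v → B ⊆ G.neighborFinset v →
      |fv A - fv B| ≤ Kv * (symmDiff A B).card / (G.degree v : ℝ)) :
    (m : ℝ) * ((Fintype.card V - m : ℕ) : ℝ) *
      |∑ T ∈ powersetCard m (univ : Finset V),
        (if v ∈ T then a else -b) * fv (T ∩ G.neighborFinset v)|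
    ≤ a * m * (Kv * ((Fintype.card V - 2).choose (m - 1) : ℕ)) := by
  classical
  set Nv := G.neighborFinset v with hNv
  set 𝒟 := powersetCard m (univ : Finset V) with h𝒟
  set F1 := 𝒟.filter (fun T => v ∈ T) with hF1
  set F2 := 𝒟.filter (fun T => v ∉ T) with hF2
  set c : ℝ := ((Fintype.card V - m : ℕ) : ℝ) with hc
  have hc0 : 0 ≤ c := Nat.cast_nonneg _
  have hm0 : (0:ℝ) ≤ (m:ℝ) := Nat.cast_nonneg _
  have hd0 : (0:ℝ) < (G.degree v : ℝ) := by exact_mod_cast hd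
  -- split the sum
  have hsplit : ∑ T ∈ 𝒟, (if v ∈ T then a else -b) * fv (T ∩ Nv)
      = a * ∑ T ∈ F1, fv (T ∩ Nv) - b * ∑ T ∈ F2, fv (T ∩ Nv) := by
    rw [← Finset.sum_filter_add_sum_filter_not 𝒟 (fun T => v ∈ T)]
    rw [Finset.mul_sum, Finset.mul_sum, sub_eq_add_neg, ← Finset.sum_neg_distrib]
    congr 1
    · exact Finset.sum_congr rfl fun T hT => by
        rw [if_pos (Finset.mem_filter.mp hT).2]
    · exact Finset.sum_congr rfl fun T hT => by
        rw [if_neg (Finset.mem_filter.mp hT).2]; ring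
  -- B1
  have hB1 : ∑ T ∈ F1, ∑ _u ∈ Tᶜ, fv (T ∩ Nv) = c * ∑ T ∈ F1, fv (T ∩ Nv) := by
    rw [Finset.mul_sum]
    refine Finset.sum_congr rfl fun T hT => ?_
    rw [Finset.sum_const, Finset.card_compl, nsmul_eq_mul]
    have : T.card = m := Finset.mem_powersetCard_univ.mp (Finset.mem_filter.mp hT).1
    rw [this]
  -- B2
  have hB2 : ∑ T ∈ F1, ∑ u ∈ Tᶜ, fv ((insert u (T.erase v)) ∩ Nv)
      = (m : ℝ) * ∑ T ∈ F2, fv (T ∩ Nv) := by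
    rw [← swap_sum' m v (fun S => fv (S ∩ Nv)), Finset.mul_sum]
    refine Finset.sum_congr rfl fun T hT => ?_
    rw [Finset.sum_const, nsmul_eq_mul]
    have : T.card = m := Finset.mem_powersetCard_univ.mp (Finset.mem_filter.mp hT).1
    rw [this]
  -- key identity
  have hkey : (m : ℝ) * c * (∑ T ∈ 𝒟, (if v ∈ T then a else -b) * fv (T ∩ Nv))
      = a * m * ∑ T ∈ F1, ∑ u ∈ Tᶜ,
          (fv (T ∩ Nv) - fv ((insert u (T.erase v)) ∩ Nv)) := by
    have hsub : ∑ T ∈ F1, ∑ u ∈ Tᶜ, (fv (T ∩ Nv) - fv ((insert u (T.erase v)) ∩ Nv))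
        = (∑ T ∈ F1, ∑ _u ∈ Tᶜ, fv (T ∩ Nv))
          - ∑ T ∈ F1, ∑ u ∈ Tᶜ, fv ((insert u (T.erase v)) ∩ Nv) := by
      rw [← Finset.sum_sub_distrib]
      exact Finset.sum_congr rfl fun T _ => by rw [← Finset.sum_sub_distrib]
    rw [hsplit, hsub, hB1, hB2]
    linear_combination ((m:ℝ) * ∑ T ∈ F2, fv (T ∩ Nv)) * hab
  -- per-term bound
  have hterm : ∀ T ∈ F1, ∀ u ∈ Tᶜ,
      |fv (T ∩ Nv) - fv ((insert u (T.erase v)) ∩ Nv)|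
        ≤ Kv / (G.degree v : ℝ) * (if u ∈ Nv then (1:ℝ) else 0) := by
    intro T hT u hu
    have hvT : v ∈ T := (Finset.mem_filter.mp hT).2
    have huT : u ∉ T := Finset.mem_compl.mp hu
    have hTv : T.erase v ∩ Nv = T ∩ Nv := by
      ext x
      simp only [Finset.mem_inter, Finset.mem_erase]
      constructor
      · rintro ⟨⟨_, h1⟩, h2⟩; exact ⟨h1, h2⟩
      · rintro ⟨h1, h2⟩
        exact ⟨⟨fun h => G.notMem_neighborFinset_self v (by rw [h] at h2; exact h2), h1⟩, h2⟩
    by_cases h : u ∈ Nv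
    · have hBeq : (insert u (T.erase v)) ∩ Nv = insert u (T ∩ Nv) := by
        rw [Finset.insert_inter_of_mem h, hTv]
      have huA : u ∉ T ∩ Nv := fun hx => huT (Finset.mem_inter.mp hx).1
      have hsd : symmDiff (T ∩ Nv) (insert u (T ∩ Nv)) = {u} := by
        ext x
        rw [Finset.mem_symmDiff, Finset.mem_singleton]
        simp only [Finset.mem_insert]
        constructor
        · rintro (⟨hx, hx2⟩ | ⟨(rfl | hx), hx2⟩)
          · exact absurd (Or.inr hx) hx2
          · rfl
          · exact absurd hx hx2
        · rintro rfl
          exact Or.inr ⟨Or.inl rfl, huA⟩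
      have := hLip (T ∩ Nv) (insert u (T ∩ Nv)) Finset.inter_subset_right
        (Finset.insert_subset h Finset.inter_subset_right)
      rw [hBeq, if_pos h]
      rw [hsd] at this
      simpa [div_eq_mul_inv, mul_comm, mul_assoc, mul_left_comm] using this
    · have hBeq : (insert u (T.erase v)) ∩ Nv = T ∩ Nv := by
        rw [Finset.insert_inter_of_notMem h, hTv]
      rw [hBeq, if_neg h, sub_self, abs_zero, mul_zero]
  -- count
  have hcount : ∑ T ∈ F1, ∑ u ∈ Tᶜ, (if u ∈ Nv then (1:ℝ) else 0)
      = (G.degree v : ℝ) * ((Fintype.card V - 2).choose (m - 1) : ℕ) := by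
    have hinner : ∀ T : Finset V, ∑ u ∈ Tᶜ, (if u ∈ Nv then (1:ℝ) else 0)
        = ∑ w ∈ Nv, (if w ∉ T then (1:ℝ) else 0) := by
      intro T
      rw [← Finset.sum_filter (fun u => u ∈ Nv) (fun _ => (1:ℝ)),
          ← Finset.sum_filter (fun w => w ∉ T) (fun _ => (1:ℝ))]
      apply Finset.sum_congr _ fun _ _ => rfl
      ext x
      simp only [Finset.mem_filter, Finset.mem_compl]
      tauto
    rw [Finset.sum_congr rfl fun T _ => hinner T, Finset.sum_comm]
    have hval : ∀ w ∈ Nv, ∑ T ∈ F1, (if w ∉ T then (1:ℝ) else 0)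
        = ((Fintype.card V - 2).choose (m - 1) : ℕ) := by
      intro w hw
      have hvw : v ≠ w := fun h => G.notMem_neighborFinset_self v (by rw [← h] at hw; exact hw)
      rw [← Finset.sum_filter (fun T => w ∉ T) (fun _ => (1:ℝ)), Finset.sum_const,
        nsmul_eq_mul, mul_one, hF1, Finset.filter_filter]
      exact_mod_cast count_lemma' m hm v w hvw
    rw [Finset.sum_congr rfl hval, Finset.sum_const, nsmul_eq_mul]
    rw [SimpleGraph.card_neighborFinset_eq_degree]
  -- final bound
  have habs : |∑ T ∈ F1, ∑ u ∈ Tᶜ, (fv (T ∩ Nv) - fv ((insert u (T.erase v)) ∩ Nv))|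
      ≤ Kv * ((Fintype.card V - 2).choose (m - 1) : ℕ) := by
    calc |∑ T ∈ F1, ∑ u ∈ Tᶜ, (fv (T ∩ Nv) - fv ((insert u (T.erase v)) ∩ Nv))|
        ≤ ∑ T ∈ F1, ∑ u ∈ Tᶜ, Kv / (G.degree v : ℝ) * (if u ∈ Nv then (1:ℝ) else 0) := by
          refine (Finset.abs_sum_le_sum_abs _ _).trans (Finset.sum_le_sum fun T hT => ?_)
          exact (Finset.abs_sum_le_sum_abs _ _).trans (Finset.sum_le_sum (hterm T hT))
      _ = Kv / (G.degree v : ℝ) * ∑ T ∈ F1, ∑ u ∈ Tᶜ, (if u ∈ Nv then (1:ℝ) else 0) := by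
          rw [Finset.mul_sum]
          exact Finset.sum_congr rfl fun T _ => (Finset.mul_sum _ _ _).symm
      _ = Kv * ((Fintype.card V - 2).choose (m - 1) : ℕ) := by
          rw [hcount]
          field_simp
  calc (m : ℝ) * c * |∑ T ∈ 𝒟, (if v ∈ T then a else -b) * fv (T ∩ Nv)|
      = |(m : ℝ) * c * ∑ T ∈ 𝒟, (if v ∈ T then a else -b) * fv (T ∩ Nv)| := by
        rw [abs_mul, abs_of_nonneg (mul_nonneg hm0 hc0)]
    _ = a * m * |∑ T ∈ F1, ∑ u ∈ Tᶜ,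
          (fv (T ∩ Nv) - fv ((insert u (T.erase v)) ∩ Nv))| := by
        rw [hkey, abs_mul, abs_of_nonneg (mul_nonneg ha hm0)]
    _ ≤ a * m * (Kv * ((Fintype.card V - 2).choose (m - 1) : ℕ)) :=
        mul_le_mul_of_nonneg_left habs (mul_nonneg ha hm0)

/-- under the completely randomized design (`T` uniform on all
`pn`-element subsets of `V(G)`), `|E_T[ξ]| ≤ K̄/(rn − 1)` where
`K̄ = (1/(rn)) Σ_v K_v`. -/
theorem stmt4
    {V : Type*} [Fintype V] [DecidableEq V]
    (G : SimpleGraph V) [DecidableRel G.Adj]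
    (p q r n : ℕ) (hp : 1 ≤ p) (hq : 1 ≤ q) (hr : r = p + q) (hn : 1 ≤ n)
    (hcard : Fintype.card V = r * n)
    (hNoIso : ∀ v : V, 0 < G.degree v)
    (K : V → ℝ) (f : V → Finset V → ℝ) (hf0 : ∀ v, f v ∅ = 0)
    (hLip : ∀ v : V, ∀ A B : Finset V,
      A ⊆ G.neighborFinset v → B ⊆ G.neighborFinset v →
      |f v A - f v B| ≤ K v * (symmDiff A B).card / (G.degree v : ℝ)) :
    let D : Finset (Finset V) := Finset.powersetCard (p * n) univ
    let xi : Finset V → ℝ := fun T =>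
      (1 / ((p : ℝ) * q * n)) *
        ∑ v, (if v ∈ T then (q : ℝ) else -(p : ℝ)) * f v (T ∩ G.neighborFinset v)
    |(∑ T ∈ D, xi T) / (D.card : ℝ)| ≤
      ((1 / ((r : ℝ) * n)) * ∑ v, K v) / ((r : ℝ) * n - 1) := by
  intro D xi
  classical
  have hm : 1 ≤ p * n := Nat.one_le_iff_ne_zero.mpr (by positivity)
  have hqn : 1 ≤ q * n := Nat.one_le_iff_ne_zero.mpr (by positivity)
  have hNm : Fintype.card V - p * n = q * n := by rw [hcard, hr, Nat.add_mul]; omega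
  have hmN : p * n < Fintype.card V := by rw [hcard, hr, Nat.add_mul]; nlinarith
  have hrn2 : 2 ≤ r * n := by rw [hr, Nat.add_mul]; nlinarith
  have hn0 : ((n:ℝ)) ≠ 0 := by positivity
  have hp0 : ((p:ℝ)) ≠ 0 := by positivity
  have hq0 : ((q:ℝ)) ≠ 0 := by positivity
  set C' : ℝ := (((Fintype.card V - 2).choose (p * n - 1) : ℕ) : ℝ) with hC'
  -- per-vertex bound
  have hX : ∀ v : V, |∑ T ∈ D, (if v ∈ T then (q:ℝ) else -(p:ℝ)) * f v (T ∩ G.neighborFinset v)|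
      ≤ K v * C' / n := by
    intro v
    have hab : (q:ℝ) * ((p * n : ℕ) : ℝ) = (p:ℝ) * ((Fintype.card V - p * n : ℕ) : ℝ) := by
      rw [hNm]; push_cast; ring
    have h := pervertex G (p * n) hm (q:ℝ) (p:ℝ) (by positivity) hab v (hNoIso v)
      (K v) (f v) (hLip v)
    have hpos : (0:ℝ) < ((p * n : ℕ) : ℝ) * ((Fintype.card V - p * n : ℕ) : ℝ) := by
      rw [hNm]; push_cast; positivity
    rw [← mul_le_mul_iff_right₀ hpos]
    refine h.trans_eq ?_
    rw [hNm]
    push_cast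
    field_simp
    ring
  -- sum swap
  have hswap : ∑ T ∈ D, xi T
      = (1 / ((p : ℝ) * q * n)) * ∑ v, ∑ T ∈ D,
          (if v ∈ T then (q : ℝ) else -(p : ℝ)) * f v (T ∩ G.neighborFinset v) := by
    rw [show ∑ T ∈ D, xi T = ∑ T ∈ D, (1 / ((p : ℝ) * q * n)) *
        ∑ v, (if v ∈ T then (q : ℝ) else -(p : ℝ)) * f v (T ∩ G.neighborFinset v) from rfl]
    rw [← Finset.mul_sum, Finset.sum_comm]
  have hbound : |∑ T ∈ D, xi T|
      ≤ (1 / ((p : ℝ) * q * n)) * ((∑ v, K v) * (C' / n)) := by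
    rw [hswap, abs_mul, abs_of_nonneg (by positivity : (0:ℝ) ≤ 1 / ((p : ℝ) * q * n))]
    refine mul_le_mul_of_nonneg_left ?_ (by positivity)
    refine (Finset.abs_sum_le_sum_abs _ _).trans ?_
    rw [Finset.sum_mul]
    exact Finset.sum_le_sum fun v _ => (hX v).trans_eq (by rw [mul_div_assoc])
  -- cardinality of D
  have hDcard : (D.card : ℝ) = (((r * n).choose (p * n) : ℕ) : ℝ) := by
    rw [show D.card = (Finset.powersetCard (p * n) (univ : Finset V)).card from rfl,
      Finset.card_powersetCard, Finset.card_univ, hcard]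
  set M : ℝ := (((r * n).choose (p * n) : ℕ) : ℝ) with hM
  have hM0 : (0:ℝ) < M := by
    rw [hM]
    exact_mod_cast Nat.choose_pos (by omega : p * n ≤ r * n)
  -- binomial identity
  have hiden : (p * n) * (q * n) * ((r * n).choose (p * n))
      = (r * n) * (r * n - 1) * ((r * n - 2).choose (p * n - 1)) := by
    have h := choose_id' (r * n) (p * n) hm (by omega)
    rwa [show r * n - p * n = q * n by rw [hr, Nat.add_mul]; omega] at h
  have hrn1 : (1 : ℕ) ≤ r * n := by omega
  have hidenR : ((p:ℝ)*n) * ((q:ℝ)*n) * M = ((r:ℝ)*n) * ((r:ℝ)*n - 1) * C' := by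
    have h := congrArg (fun k : ℕ => (k : ℝ)) hiden
    rw [hC', hcard]
    push_cast [Nat.cast_sub hrn1] at h ⊢
    linarith [h]
  have hrn1R : (0:ℝ) < (r:ℝ) * n - 1 := by
    have : (2:ℝ) ≤ (r:ℝ) * n := by exact_mod_cast hrn2
    linarith
  rw [hDcard]
  rw [abs_div, abs_of_nonneg hM0.le]
  calc |∑ T ∈ D, xi T| / M
      ≤ ((1 / ((p : ℝ) * q * n)) * ((∑ v, K v) * (C' / n))) / M := by gcongr
    _ = ((1 / ((r : ℝ) * n)) * ∑ v, K v) / ((r : ℝ) * n - 1) := by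
        have hr0 : ((r:ℝ)) ≠ 0 := by
          have : 0 < r := by omega
          exact_mod_cast this.ne'
        rw [div_eq_div_iff hM0.ne' hrn1R.ne']
        field_simp
        have h' : (p:ℝ)*q*n*M = r*(r*n-1)*C' := by
          apply mul_left_cancel₀ hn0
          linear_combination hidenR
        linear_combination (-(∑ v, K v)) * h'
end

section
/- Let H be a graph with |V(H)| > 1 and let G be the disjoint union of 2^{|V(H)|} copies of H, indexed by vectors ε ∈ {0,1}^{V(H)} (so V(G) = V(H) × {0,1}^{V(H)}, with (v,ε) adjacent to (w,ε') iff ε = ε' and vw ∈ E(H)). Then the set Q = {(v, ε) : ε_v = 1} is a perfect quasi-coloring of G, i.e., D_Q = 0. -/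
open Finset

/-- let `H` be a graph with more than one vertex and let `G` be the
disjoint union of `2^{|V(H)|}` copies of `H`, with vertex set
`V(H) × {0,1}^{V(H)}` and `(v,ε)` adjacent to `(w,ε')` iff `ε = ε'` and
`vw ∈ E(H)`. Then `Q = {(v,ε) : ε_v = 1}` is a perfect quasi-coloring of `G`:
it contains half the vertices and its bidegree measure `D_Q` vanishes. -/
theorem stmt6
    {W : Type*} [Fintype W] [DecidableEq W]
    (H : SimpleGraph W) [DecidableRel H.Adj]
    (hW : 1 < Fintype.card W) :
    let Nbr : W × (W → Bool) → Finset (W × (W → Bool)) := fun a =>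
      univ.filter (fun b => a.2 = b.2 ∧ H.Adj a.1 b.1)
    let Q : Finset (W × (W → Bool)) := univ.filter (fun a => a.2 a.1 = true)
    let n : ℕ := Fintype.card (W × (W → Bool)) / 2
    Q.card = n ∧
    (∀ u : ℕ × ℕ,
      (1 / (n : ℝ)) * ∑ a, (if a ∈ Q then (1 : ℝ) else -1) *
        (if ((Q ∩ Nbr a).card, (Nbr a \ Q).card) = u then 1 else 0) = 0) := by
  intro Nbr Q n
  -- the involution
  set g : W × (W → Bool) → W × (W → Bool) :=
    fun a => (a.1, Function.update a.2 a.1 (!a.2 a.1)) with hg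
  have hgg : ∀ a, g (g a) = a := by
    rintro ⟨v, ε⟩
    simp [hg, Function.update_idem, Function.update_self, Bool.not_not,
      Function.update_eq_self]
  have hQmem : ∀ a, a ∈ Q ↔ a.2 a.1 = true := by
    intro a; simp [Q]
  have hgQ : ∀ a, g a ∈ Q ↔ a ∉ Q := by
    rintro ⟨v, ε⟩
    simp [hQmem, hg]
  -- bidegree in terms of filters over W
  have hQN : ∀ (v : W) (ε : W → Bool),
      Q ∩ Nbr (v, ε) =
        (univ.filter fun w => H.Adj v w ∧ ε w = true).image (fun w => (w, ε)) := by
    intro v ε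
    ext ⟨w, δ⟩
    simp only [mem_inter, mem_filter, mem_univ, true_and, mem_image, Q, Nbr]
    constructor
    · rintro ⟨h1, h2, h3⟩
      exact ⟨w, ⟨h3, h2 ▸ h1⟩, by rw [h2]⟩
    · rintro ⟨x, ⟨ha, hb⟩, hc⟩
      obtain ⟨rfl, rfl⟩ := Prod.mk.injEq .. ▸ hc
      exact ⟨hb, rfl, ha⟩
  have hNQ : ∀ (v : W) (ε : W → Bool),
      Nbr (v, ε) \ Q =
        (univ.filter fun w => H.Adj v w ∧ ε w = false).image (fun w => (w, ε)) := by
    intro v ε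
    ext ⟨w, δ⟩
    simp only [mem_sdiff, mem_filter, mem_univ, true_and, mem_image, Q, Nbr,
      Bool.not_eq_true]
    constructor
    · rintro ⟨⟨h2, h3⟩, h1⟩
      exact ⟨w, ⟨h3, h2 ▸ h1⟩, by rw [h2]⟩
    · rintro ⟨x, ⟨ha, hb⟩, hc⟩
      obtain ⟨rfl, rfl⟩ := Prod.mk.injEq .. ▸ hc
      exact ⟨⟨rfl, ha⟩, hb⟩
  have hinj : ∀ ε : W → Bool, Function.Injective (fun w : W => (w, ε)) := by
    intro ε w w' h; exact congrArg Prod.fst h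
  -- the involution preserves both bidegree coordinates
  have hfilter : ∀ (v : W) (ε : W → Bool) (b : Bool),
      (univ.filter fun w => H.Adj v w ∧ Function.update ε v (!ε v) w = b) =
      (univ.filter fun w => H.Adj v w ∧ ε w = b) := by
    intro v ε b
    apply filter_congr
    intro w _
    by_cases h : H.Adj v w
    · rw [Function.update_of_ne (H.ne_of_adj h).symm]
    · simp [h]
  have hdeg : ∀ a, ((Q ∩ Nbr (g a)).card, (Nbr (g a) \ Q).card)
      = ((Q ∩ Nbr a).card, (Nbr a \ Q).card) := by
    rintro ⟨v, ε⟩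
    simp only [hg]
    rw [hQN, hQN, hNQ, hNQ,
      card_image_of_injective _ (hinj _), card_image_of_injective _ (hinj _),
      card_image_of_injective _ (hinj _), card_image_of_injective _ (hinj _),
      hfilter, hfilter]
  constructor
  · -- cardinality
    have hbij : Q.card = (univ \ Q).card := by
      apply Finset.card_bij' (fun a _ => g a) (fun a _ => g a)
      · intro a ha
        simp only [mem_sdiff, mem_univ, true_and]
        intro h
        exact (hgQ a).mp h ha
      · intro a ha
        rw [hgQ]
        simp only [mem_sdiff] at ha
        exact ha.2
      · intro a _; exact hgg a
      · intro a _; exact hgg a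
    have hle : Q.card ≤ (univ : Finset (W × (W → Bool))).card :=
      card_le_card (subset_univ Q)
    have htot : Q.card + (univ \ Q).card = Fintype.card (W × (W → Bool)) := by
      rw [card_sdiff_of_subset (subset_univ Q), ← Finset.card_univ]
      omega
    show Q.card = Fintype.card (W × (W → Bool)) / 2
    omega
  · intro u
    have hsum : ∑ a, (if a ∈ Q then (1 : ℝ) else -1) *
        (if ((Q ∩ Nbr a).card, (Nbr a \ Q).card) = u then 1 else 0) = 0 := by
      apply Finset.sum_ninvolution g
      · intro a
        rw [hdeg a]
        by_cases hQ : a ∈ Q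
        · rw [if_pos hQ, if_neg ((hgQ a).not_left.mpr (by simpa using hQ))]
          ring
        · rw [if_neg hQ, if_pos ((hgQ a).mpr hQ)]
          ring
      · intro a _
        intro h
        have := hgQ a
        rw [h] at this
        tauto
      · intro a; exact mem_univ _
      · exact hgg
    rw [hsum, mul_zero]
end

section
/- Let X_1, …, X_n be real random variables with finite variances such that for each index i there are at most κ indices j with X_i and X_j not independent. Then Var(Σ_{i=1}^n X_i) ≤ κ Σ_{i=1}^n Var(X_i). -/
open MeasureTheory ProbabilityTheory

lemma stmt10_aux_mul_le (a b : ℝ) : a * b ≤ (a ^ 2 + b ^ 2) / 2 := by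
  nlinarith [sq_nonneg (a - b)]

lemma stmt10_aux_abs_mul_le (a b : ℝ) : |a * b| ≤ (a ^ 2 + b ^ 2) / 2 := by
  rw [abs_mul]; nlinarith [sq_nonneg (|a| - |b|), sq_abs a, sq_abs b]

/-- if `X_1,…,X_n` are square-integrable real random variables such
that each `X_i` fails to be independent of at most `κ` of the `X_j`, then
`Var(Σ_i X_i) ≤ κ Σ_i Var(X_i)`. -/
theorem stmt10
    {Ω : Type*} [MeasurableSpace Ω] (μ : Measure Ω) [IsProbabilityMeasure μ]
    (n κ : ℕ) (X : Fin n → Ω → ℝ)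
    (hmeas : ∀ i, Measurable (X i))
    (hL2 : ∀ i, MeasureTheory.MemLp (X i) 2 μ)
    (hκ : ∀ i, ({j | ¬ ProbabilityTheory.IndepFun (X i) (X j) μ} : Set (Fin n)).ncard ≤ κ) :
    ProbabilityTheory.variance (fun ω => ∑ i, X i ω) μ ≤
      (κ : ℝ) * ∑ i, ProbabilityTheory.variance (X i) μ := by
  classical
  set m : Fin n → ℝ := fun i => μ[X i] with hm
  set Y : Fin n → Ω → ℝ := fun i ω => X i ω - m i with hY
  have hYmeas : ∀ i, Measurable (Y i) := fun i => (hmeas i).sub measurable_const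
  have hYL2 : ∀ i, MemLp (Y i) 2 μ := fun i => (hL2 i).sub (memLp_const _)
  have hYsq : ∀ i, Integrable (fun ω => Y i ω ^ 2) μ := by
    intro i
    have := (hYL2 i).integrable_sq
    simpa [sq] using this
  -- integrability of products
  have hprod : ∀ i j, Integrable (fun ω => Y i ω * Y j ω) μ := by
    intro i j
    refine Integrable.mono (((hYsq i).add (hYsq j)).div_const 2)
      ((hYmeas i).mul (hYmeas j)).aestronglyMeasurable (ae_of_all _ fun ω => ?_)
    have h1 : |Y i ω * Y j ω| ≤ (Y i ω ^ 2 + Y j ω ^ 2) / 2 := stmt10_aux_abs_mul_le _ _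
    have h2 : (0:ℝ) ≤ (Y i ω ^ 2 + Y j ω ^ 2) / 2 := by positivity
    simp only [Pi.add_apply, Real.norm_eq_abs]
    rw [abs_of_nonneg h2]
    exact h1
  -- variance of X i equals ∫ (Y i)^2
  have hvar : ∀ i, variance (X i) μ = ∫ ω, Y i ω ^ 2 ∂μ := by
    intro i
    rw [variance_eq_integral (hL2 i).aestronglyMeasurable.aemeasurable]
  -- covariance vanishes for independent pairs
  have hcov0 : ∀ i j, IndepFun (X i) (X j) μ → (∫ ω, Y i ω * Y j ω ∂μ) = 0 := by
    intro i j hij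
    have hYind : IndepFun (Y i) (Y j) μ :=
      hij.comp (φ := fun x => x - m i) (ψ := fun x => x - m j)
        (measurable_id.sub measurable_const) (measurable_id.sub measurable_const)
    have hYi_int : Integrable (Y i) μ := (hYL2 i).integrable one_le_two
    have hYj_int : Integrable (Y j) μ := (hYL2 j).integrable one_le_two
    have hEi : (∫ ω, Y i ω ∂μ) = 0 := by
      simp only [hY, integral_sub ((hL2 i).integrable one_le_two) (integrable_const _),
        integral_const, measure_univ, probReal_univ, ENNReal.toReal_one, smul_eq_mul, one_mul, hm, sub_self]
    have := hYind.integral_mul_eq_mul_integral hYi_int.aestronglyMeasurable hYj_int.aestronglyMeasurable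
    have heq : (∫ ω, Y i ω * Y j ω ∂μ) = (∫ ω, Y i ω ∂μ) * ∫ ω, Y j ω ∂μ := this
    rw [heq, hEi, zero_mul]
  -- variance of sum = double sum of covariances
  have hsum : variance (fun ω => ∑ i, X i ω) μ
      = ∑ i, ∑ j, ∫ ω, Y i ω * Y j ω ∂μ := by
    have hS : MemLp (fun ω => ∑ i, X i ω) 2 μ := by
      have h := memLp_finset_sum' (μ := μ) (p := 2) Finset.univ fun i (_ : i ∈ Finset.univ) => hL2 i
      have heq : (fun ω => ∑ i, X i ω) = ∑ i, X i := by funext ω; simp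
      rw [heq]; exact h
    rw [variance_eq_integral hS.aestronglyMeasurable.aemeasurable]
    change MeasureTheory.integral μ ((((fun ω => ∑ i, X i ω) - fun _ => μ[fun ω => ∑ i, X i ω]) ^ (2:ℕ) : Ω → ℝ)) = _
    have hmeanS : μ[fun ω => ∑ i, X i ω] = ∑ i, m i := by
      rw [integral_finset_sum _ fun i _ => (hL2 i).integrable one_le_two]
    have hfun : ((fun ω => ∑ i, X i ω) - fun _ => μ[fun ω => ∑ i, X i ω]) ^ (2:ℕ)
        = fun ω => ∑ i, ∑ j, Y i ω * Y j ω := by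
      funext ω
      simp only [Pi.pow_apply, Pi.sub_apply, hmeanS, hY]
      rw [← Finset.sum_sub_distrib, sq, Finset.sum_mul_sum]
    rw [hfun, integral_finset_sum _ fun i _ =>
      integrable_finset_sum _ fun j _ => hprod i j]
    exact Finset.sum_congr rfl fun i _ => integral_finset_sum _ fun j _ => hprod i j
  -- bound each covariance
  have hcovle : ∀ i j, (∫ ω, Y i ω * Y j ω ∂μ)
      ≤ (variance (X i) μ + variance (X j) μ) / 2 := by
    intro i j
    rw [hvar, hvar]
    have h1 : (∫ ω, Y i ω * Y j ω ∂μ) ≤ ∫ ω, (Y i ω ^ 2 + Y j ω ^ 2) / 2 ∂μ := by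
      refine integral_mono (hprod i j) (((hYsq i).add (hYsq j)).div_const 2) fun ω => ?_
      exact stmt10_aux_mul_le _ _
    calc (∫ ω, Y i ω * Y j ω ∂μ) ≤ ∫ ω, (Y i ω ^ 2 + Y j ω ^ 2) / 2 ∂μ := h1
      _ = ((∫ ω, Y i ω ^ 2 ∂μ) + ∫ ω, Y j ω ^ 2 ∂μ) / 2 := by
          rw [integral_div, integral_add (hYsq i) (hYsq j)]
  -- the "bad" sets
  set F : Fin n → Finset (Fin n) := fun i =>
    Finset.univ.filter fun j => ¬ IndepFun (X i) (X j) μ with hF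
  have hFcard : ∀ i, (F i).card ≤ κ := by
    intro i
    have := hκ i
    rwa [Set.ncard_eq_toFinset_card', Set.toFinset_setOf] at this
  have hvar_nonneg : ∀ i, 0 ≤ variance (X i) μ := fun i => variance_nonneg _ _
  rw [hsum]
  have step1 : ∀ i, (∑ j, ∫ ω, Y i ω * Y j ω ∂μ)
      = ∑ j ∈ F i, ∫ ω, Y i ω * Y j ω ∂μ := by
    intro i
    rw [hF]
    refine (Finset.sum_filter_of_ne fun j _ hne => ?_).symm
    by_contra hindep
    exact hne (hcov0 i j hindep)
  calc (∑ i, ∑ j, ∫ ω, Y i ω * Y j ω ∂μ)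
      = ∑ i, ∑ j ∈ F i, ∫ ω, Y i ω * Y j ω ∂μ :=
        Finset.sum_congr rfl fun i _ => step1 i
    _ ≤ ∑ i, ∑ j ∈ F i, (variance (X i) μ + variance (X j) μ) / 2 :=
        Finset.sum_le_sum fun i _ => Finset.sum_le_sum fun j _ => hcovle i j
    _ = (∑ i, ∑ j ∈ F i, variance (X i) μ) / 2
        + (∑ i, ∑ j ∈ F i, variance (X j) μ) / 2 := by
        simp only [Finset.sum_div, ← Finset.sum_add_distrib]
        exact Finset.sum_congr rfl fun i _ => Finset.sum_congr rfl fun j _ => by ring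
    _ ≤ ((κ:ℝ) * ∑ i, variance (X i) μ) / 2 + ((κ:ℝ) * ∑ i, variance (X i) μ) / 2 := by
        gcongr with hh
        · -- rows
          rw [Finset.mul_sum]
          refine Finset.sum_le_sum fun i _ => ?_
          rw [Finset.sum_const, nsmul_eq_mul]
          exact mul_le_mul_of_nonneg_right (by exact_mod_cast hFcard i) (hvar_nonneg i)
        · -- columns
          have hswap : (∑ i, ∑ j ∈ F i, variance (X j) μ)
              = ∑ j, ((Finset.univ.filter fun i => j ∈ F i).card : ℝ) * variance (X j) μ := by
            rw [Finset.sum_comm' (s := Finset.univ) (t := F) (t' := Finset.univ)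
              (s' := fun j => Finset.univ.filter fun i => j ∈ F i) (by
                intro i j
                simp [Finset.mem_filter])]
            exact Finset.sum_congr rfl fun j _ => by
              rw [Finset.sum_const, nsmul_eq_mul]
          rw [hswap, Finset.mul_sum]
          refine Finset.sum_le_sum fun j _ => ?_
          refine mul_le_mul_of_nonneg_right ?_ (hvar_nonneg j)
          have hcols : (Finset.univ.filter fun i => j ∈ F i) ⊆ F j := by
            intro i hi
            simp only [hF, Finset.mem_filter, Finset.mem_univ, true_and] at hi ⊢
            exact fun h => hi h.symm
          exact_mod_cast (Finset.card_le_card hcols).trans (hFcard j)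
    _ = (κ:ℝ) * ∑ i, variance (X i) μ := by ring
end

section
/- For p = q = 1, r = 2, choosing the treatment T uniformly at random between a perfect quasi-coloring Q and its complement V(G)\Q makes the Neymanian estimator exactly unbiased for the average direct treatment effect under any symmetric interference model: E_T[t̂_Neyman] = t̄. -/
open Finset

/-- for `p = q = 1`, `r = 2`, choosing the treatment uniformly at
random between a perfect quasi-coloring `Q` and its complement makes the
Neymanian estimator exactly unbiased under any symmetric interference model:
`(t̂_Neyman(Q) + t̂_Neyman(V\Q))/2 = t̄`. -/
theorem stmt17
    {V : Type*} [Fintype V] [DecidableEq V]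
    (G : SimpleGraph V) [DecidableRel G.Adj]
    (n : ℕ) (hn : 1 ≤ n) (hcard : Fintype.card V = 2 * n)
    (hNoIso : ∀ v : V, 0 < G.degree v)
    (Q : Finset V) (hQ : Q.card = n)
    (x t : V → ℝ) (f : ℕ × ℕ → ℝ)
    (hQperfect : ∀ u : ℕ × ℕ,
      (1 / (n : ℝ)) * ∑ v, (if v ∈ Q then (1 : ℝ) else -1) *
        (if ((Q ∩ G.neighborFinset v).card, (G.neighborFinset v \ Q).card) = u
          then 1 else 0) = 0) :
    let tNeyman : Finset V → ℝ := fun T =>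
      (1 / (n : ℝ)) * ∑ v, (if v ∈ T then (1 : ℝ) else -1) *
        (x v + (if v ∈ T then t v else 0) +
          f ((T ∩ G.neighborFinset v).card, (G.neighborFinset v \ T).card))
    (tNeyman Q + tNeyman Qᶜ) / 2 = (1 / ((2 : ℝ) * n)) * ∑ v, t v := by
  intro tNeyman
  have hn' : (n : ℝ) ≠ 0 := by positivity
  set ε : V → ℝ := fun v => if v ∈ Q then (1 : ℝ) else -1 with hε
  set p : V → ℕ × ℕ := fun v =>
    ((Q ∩ G.neighborFinset v).card, (G.neighborFinset v \ Q).card) with hp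
  -- sums against ε of any function of p vanish
  have key : ∀ g : ℕ × ℕ → ℝ, ∑ v, ε v * g (p v) = 0 := by
    intro g
    have hzero : ∀ u : ℕ × ℕ, ∑ v, ε v * (if p v = u then (1 : ℝ) else 0) = 0 := by
      intro u
      have := hQperfect u
      have h1n : (1 / (n : ℝ)) ≠ 0 := by positivity
      field_simp at this
      simpa [hε, hp] using this
    classical
    have : ∑ v, ε v * g (p v)
        = ∑ v, ∑ u ∈ Finset.image p Finset.univ,
            g u * (ε v * (if p v = u then (1 : ℝ) else 0)) := by
      refine Finset.sum_congr rfl fun v _ => ?_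
      rw [Finset.sum_eq_single (p v)]
      · simp [mul_comm]
      · intro b _ hb; simp [Ne.symm hb]
      · intro h; exact absurd (Finset.mem_image_of_mem p (Finset.mem_univ v)) h
    rw [this, Finset.sum_comm]
    refine Finset.sum_eq_zero fun u _ => ?_
    rw [← Finset.mul_sum, hzero u, mul_zero]
  -- complements of intersections
  have hc1 : ∀ v : V, Qᶜ ∩ G.neighborFinset v = G.neighborFinset v \ Q := by
    intro v; ext a; simp [and_comm]
  have hc2 : ∀ v : V, G.neighborFinset v \ Qᶜ = Q ∩ G.neighborFinset v := by
    intro v; ext a; simp [and_comm]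
  -- pointwise identity
  have hpt : ∀ v : V,
      (if v ∈ Q then (1 : ℝ) else -1) *
        (x v + (if v ∈ Q then t v else 0) +
          f ((Q ∩ G.neighborFinset v).card, (G.neighborFinset v \ Q).card))
      + (if v ∈ Qᶜ then (1 : ℝ) else -1) *
        (x v + (if v ∈ Qᶜ then t v else 0) +
          f ((Qᶜ ∩ G.neighborFinset v).card, (G.neighborFinset v \ Qᶜ).card))
      = t v + ε v * (f (p v) - f ((p v).2, (p v).1)) := by
    intro v
    rw [hc1 v, hc2 v]
    by_cases h : v ∈ Q <;> simp [hε, hp, h] <;> ring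
  have hsum : ∑ v, ε v * (f (p v) - f ((p v).2, (p v).1)) = 0 :=
    key fun u => f u - f (u.2, u.1)
  have hmain : tNeyman Q + tNeyman Qᶜ = (1 / (n : ℝ)) * ∑ v, t v := by
    show (1 / (n : ℝ)) * _ + (1 / (n : ℝ)) * _ = _
    rw [← mul_add, ← Finset.sum_add_distrib]
    congr 1
    rw [Finset.sum_congr rfl fun v _ => hpt v, Finset.sum_add_distrib, hsum, add_zero]
  rw [hmain, one_div, one_div, mul_inv]
  ring
end

section
/- For the partitioning-by-degree design T = T_{B,P*} (blocks of r vertices of consecutive rank in the degree ordering, with a uniform p-subset of each block treated independently), if the symmetric interference function f satisfies ‖f‖_{d_K} ≤ 1 then the bias satisfies |E_T[ξ]| ≤ min{r−1, d_min}(K_1 + K_2)/((r−1) d_min). -/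
open Finset

section Aux
set_option linter.unusedSectionVars false
variable {V : Type*} [Fintype V] [DecidableEq V] {n p q r : ℕ}

lemma swap_mem_block (S : Fin n → Finset V)
    (hdisj : ∀ (i j : Fin n) (x : V), x ∈ S i → x ∈ S j → i = j)
    {i j : Fin n} {a b x : V} (ha : a ∈ S i) (hb : b ∈ S i) (hx : x ∈ S j) :
    Equiv.swap a b x ∈ S j := by
  rcases eq_or_ne x a with rfl | hxa
  · rw [Equiv.swap_apply_left]; rwa [hdisj i j x ha hx] at hb
  rcases eq_or_ne x b with rfl | hxb
  · rw [Equiv.swap_apply_right]; rwa [hdisj i j x hb hx] at ha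
  · rwa [Equiv.swap_apply_of_ne_of_ne hxa hxb]

lemma mem_image_swap {a b x : V} (T : Finset V) :
    x ∈ T.image (Equiv.swap a b) ↔ Equiv.swap a b x ∈ T := by
  constructor
  · intro h
    obtain ⟨t, ht, rfl⟩ := mem_image.1 h
    rwa [Equiv.swap_apply_self]
  · intro h
    exact mem_image.2 ⟨_, h, Equiv.swap_apply_self _ _ _⟩

lemma image_swap_image_swap {a b : V} (T : Finset V) :
    (T.image (Equiv.swap a b)).image (Equiv.swap a b) = T := by
  rw [Finset.image_image]
  have : (⇑(Equiv.swap a b) ∘ ⇑(Equiv.swap a b)) = id := by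
    funext x; simp [Equiv.swap_apply_self]
  rw [this, Finset.image_id]

lemma image_swap_mem_D (S : Fin n → Finset V) (D : Finset (Finset V))
    (hD : ∀ T : Finset V, T ∈ D ↔ ∀ i, (T ∩ S i).card = p)
    (hdisj : ∀ (i j : Fin n) (x : V), x ∈ S i → x ∈ S j → i = j)
    {i : Fin n} {a b : V} (ha : a ∈ S i) (hb : b ∈ S i)
    {T : Finset V} (hT : T ∈ D) : T.image (Equiv.swap a b) ∈ D := by
  rw [hD] at hT ⊢
  intro j
  have himg : T.image (Equiv.swap a b) ∩ S j = (T ∩ S j).image (Equiv.swap a b) := by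
    ext x
    simp only [mem_inter, mem_image_swap]
    constructor
    · rintro ⟨hxT, hxS⟩
      exact ⟨hxT, swap_mem_block S hdisj ha hb hxS⟩
    · rintro ⟨hxT, hxS⟩
      refine ⟨hxT, ?_⟩
      have := swap_mem_block S hdisj ha hb hxS
      rwa [Equiv.swap_apply_self] at this
  rw [himg, Finset.card_image_of_injective _ (Equiv.injective _)]
  exact hT j

end Aux
section Aux2
set_option linter.unusedSectionVars false
variable {V : Type*} [Fintype V] [DecidableEq V] {n p q r : ℕ}

/-- the count of designs containing x and avoiding y is invariant under an in-block swap -/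
lemma g_swap (S : Fin n → Finset V) (D : Finset (Finset V))
    (hD : ∀ T : Finset V, T ∈ D ↔ ∀ i, (T ∩ S i).card = p)
    (hdisj : ∀ (i j : Fin n) (x : V), x ∈ S i → x ∈ S j → i = j)
    {i : Fin n} {a b : V} (ha : a ∈ S i) (hb : b ∈ S i) (x y : V) :
    (D.filter (fun T => x ∈ T ∧ y ∉ T)).card
      = (D.filter (fun T => Equiv.swap a b x ∈ T ∧ Equiv.swap a b y ∉ T)).card := by
  apply Finset.card_nbij' (fun T => T.image (Equiv.swap a b)) (fun T => T.image (Equiv.swap a b))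
  · intro T hT
    rw [mem_coe, mem_filter] at hT ⊢
    obtain ⟨hTD, hxT, hyT⟩ := hT
    refine ⟨image_swap_mem_D S D hD hdisj ha hb hTD, ?_, ?_⟩
    · rw [mem_image_swap, Equiv.swap_apply_self]; exact hxT
    · rw [mem_image_swap, Equiv.swap_apply_self]; exact hyT
  · intro T hT
    rw [mem_coe, mem_filter] at hT ⊢
    obtain ⟨hTD, hxT, hyT⟩ := hT
    refine ⟨image_swap_mem_D S D hD hdisj ha hb hTD, ?_, ?_⟩
    · rw [mem_image_swap]; exact hxT
    · rw [mem_image_swap]; exact hyT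
  · intro T _; exact image_swap_image_swap T
  · intro T _; exact image_swap_image_swap T

/-- g is constant over ordered pairs of distinct elements of a block -/
lemma g_const (S : Fin n → Finset V) (D : Finset (Finset V))
    (hD : ∀ T : Finset V, T ∈ D ↔ ∀ i, (T ∩ S i).card = p)
    (hdisj : ∀ (i j : Fin n) (x : V), x ∈ S i → x ∈ S j → i = j)
    {i : Fin n} {x y v u : V} (hx : x ∈ S i) (hy : y ∈ S i) (hv : v ∈ S i) (hu : u ∈ S i)
    (hxy : x ≠ y) (hvu : v ≠ u) :
    (D.filter (fun T => x ∈ T ∧ y ∉ T)).card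
      = (D.filter (fun T => v ∈ T ∧ u ∉ T)).card := by
  set y₁ := Equiv.swap x v y with hy₁def
  have h1 : (D.filter (fun T => x ∈ T ∧ y ∉ T)).card
      = (D.filter (fun T => v ∈ T ∧ y₁ ∉ T)).card := by
    have := g_swap S D hD hdisj hx hv x y
    rwa [Equiv.swap_apply_left] at this
  have hy₁mem : y₁ ∈ S i := swap_mem_block S hdisj hx hv hy
  have hy₁v : y₁ ≠ v := by
    intro h
    have : y = x := by
      have := congrArg (Equiv.swap x v) h
      rwa [Equiv.swap_apply_self, Equiv.swap_apply_right] at this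
    exact hxy this.symm
  have h2 : (D.filter (fun T => v ∈ T ∧ y₁ ∉ T)).card
      = (D.filter (fun T => v ∈ T ∧ u ∉ T)).card := by
    have := g_swap S D hD hdisj hy₁mem hu v y₁
    rwa [Equiv.swap_apply_left, Equiv.swap_apply_of_ne_of_ne hy₁v.symm hvu] at this
  rw [h1, h2]

end Aux2
section Aux3
set_option linter.unusedSectionVars false
variable {V : Type*} [Fintype V] [DecidableEq V] {n p q r : ℕ}

lemma g_count (S : Fin n → Finset V) (D : Finset (Finset V))
    (hD : ∀ T : Finset V, T ∈ D ↔ ∀ i, (T ∩ S i).card = p)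
    (hdisj : ∀ (i j : Fin n) (x : V), x ∈ S i → x ∈ S j → i = j)
    (hScard : ∀ i, (S i).card = r) (hr : r = p + q)
    {i : Fin n} {v u : V} (hv : v ∈ S i) (hu : u ∈ S i) (hvu : v ≠ u) :
    (D.filter (fun T => v ∈ T ∧ u ∉ T)).card * (r * (r - 1)) = D.card * (p * q) := by
  set g₀ := (D.filter (fun T => v ∈ T ∧ u ∉ T)).card with hg₀
  -- step 1 : D.card * (p*q) = ∑_{T∈D} ∑_{x∈S i} ∑_{y∈S i} ite (x∈T ∧ y∉T) 1 0
  have step1 : D.card * (p * q)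
      = ∑ T ∈ D, ∑ x ∈ S i, ∑ y ∈ S i, (if x ∈ T ∧ y ∉ T then 1 else 0) := by
    rw [Finset.card_eq_sum_ones D, Finset.sum_mul, one_mul]
    apply Finset.sum_congr rfl
    intro T hT
    have hxsum : ∀ x ∈ S i, ∑ y ∈ S i, (if x ∈ T ∧ y ∉ T then 1 else 0)
        = if x ∈ T then ((S i) \ T).card else 0 := by
      intro x _
      by_cases hx : x ∈ T
      · simp only [hx, true_and, if_true]
        rw [Finset.sdiff_eq_filter, Finset.card_filter]
      · simp [hx]
    rw [Finset.sum_congr rfl hxsum]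
    have : ∑ x ∈ S i, (if x ∈ T then ((S i) \ T).card else 0)
        = (S i ∩ T).card * ((S i) \ T).card := by
      rw [Finset.sum_ite_mem, Finset.sum_const, smul_eq_mul]
    rw [this]
    have h1 : (S i ∩ T).card = p := by
      rw [Finset.inter_comm]; exact (hD T).1 hT i
    have h2 : ((S i) \ T).card = q := by
      have := Finset.card_inter_add_card_sdiff (S i) T
      rw [h1, hScard i, hr] at this
      omega
    rw [h1, h2]
  -- step 2: swap the sums and identify with g
  have step2 : ∑ T ∈ D, ∑ x ∈ S i, ∑ y ∈ S i, (if x ∈ T ∧ y ∉ T then 1 else 0)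
      = ∑ x ∈ S i, ∑ y ∈ S i, (D.filter (fun T => x ∈ T ∧ y ∉ T)).card := by
    rw [Finset.sum_comm]
    apply Finset.sum_congr rfl
    intro x _
    rw [Finset.sum_comm]
    apply Finset.sum_congr rfl
    intro y _
    rw [Finset.card_filter]
  -- step 3: each off-diagonal term equals g₀, diagonal is 0
  have step3 : ∑ x ∈ S i, ∑ y ∈ S i, (D.filter (fun T => x ∈ T ∧ y ∉ T)).card
      = r * (r-1) * g₀ := by
    have hinner : ∀ x ∈ S i, ∑ y ∈ S i, (D.filter (fun T => x ∈ T ∧ y ∉ T)).card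
        = (r - 1) * g₀ := by
      intro x hx
      have hterm : ∀ y ∈ S i, (D.filter (fun T => x ∈ T ∧ y ∉ T)).card
          = if y = x then 0 else g₀ := by
        intro y hy
        by_cases hyx : y = x
        · subst hyx
          simp only [if_true]
          rw [Finset.card_eq_zero, Finset.filter_eq_empty_iff]
          intro T _
          tauto
        · simp only [hyx, if_false]
          exact g_const S D hD hdisj hx hy hv hu (Ne.symm hyx) hvu
      rw [Finset.sum_congr rfl hterm, ← Finset.add_sum_erase _ _ hx, if_pos rfl, zero_add]
      have herase : ∑ y ∈ (S i).erase x, (if y = x then 0 else g₀)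
          = ∑ _y ∈ (S i).erase x, g₀ :=
        Finset.sum_congr rfl (fun y hy => if_neg (Finset.mem_erase.1 hy).1)
      rw [herase, Finset.sum_const, Finset.card_erase_of_mem hx, hScard i, smul_eq_mul]
    rw [Finset.sum_congr rfl hinner, Finset.sum_const, hScard i, smul_eq_mul, mul_assoc]
  rw [step1, step2, step3]; ring
end Aux3
section Aux4
set_option linter.unusedSectionVars false
variable {V : Type*} [Fintype V] [DecidableEq V]

lemma term_bound (G : SimpleGraph V) [DecidableRel G.Adj]
    (K₁ K₂ : ℝ) (hK₁ : 0 ≤ K₁) (hK₂ : 0 < K₂)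
    (f : ℕ × ℕ → ℝ)
    (hf : ∀ u u' : ℕ × ℕ,
      (∃ v : V, u.1 + u.2 = G.degree v) → (∃ v : V, u'.1 + u'.2 = G.degree v) →
      |f u - f u'| ≤
        K₁ * |((u.1 : ℝ) + u.2) - ((u'.1 : ℝ) + u'.2)| / (G.maxDegree : ℝ) +
        K₂ * |(u.1 : ℝ) / ((u.1 : ℝ) + u.2) - (u'.1 : ℝ) / ((u'.1 : ℝ) + u'.2)|)
    (v u : V) (hd : 0 < G.degree v) (T : Finset V) (hvT : v ∈ T) (huT : u ∉ T) :
    |f ((T ∩ G.neighborFinset v).card, (G.neighborFinset v \ T).card)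
      - f (((T.image (Equiv.swap v u)) ∩ G.neighborFinset v).card,
           (G.neighborFinset v \ (T.image (Equiv.swap v u))).card)|
      ≤ if u ∈ G.neighborFinset v then K₂ / (G.degree v : ℝ) else 0 := by
  set N := G.neighborFinset v with hN
  have hvN : v ∉ N := by simp [hN]
  have hvu : v ≠ u := fun h => huT (h ▸ hvT)
  set T' := T.image (Equiv.swap v u) with hT'
  by_cases hu : u ∈ N
  · -- swap with a neighbor
    have huv : u ≠ v := hvu.symm
    have h1 : T' ∩ N = insert u (T ∩ N) := by
      ext x
      simp only [hT', mem_inter, mem_image_swap, mem_insert]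
      rcases eq_or_ne x u with rfl | hxu
      · simp [Equiv.swap_apply_right, hvT, hu]
      rcases eq_or_ne x v with rfl | hxv
      · simp [Equiv.swap_apply_left, huT, hvN, hxu]
      · rw [Equiv.swap_apply_of_ne_of_ne hxv hxu]
        tauto
    have h2 : N \ T' = (N \ T).erase u := by
      ext x
      simp only [hT', mem_sdiff, mem_image_swap, mem_erase]
      rcases eq_or_ne x u with rfl | hxu
      · simp [Equiv.swap_apply_right, hvT]
      rcases eq_or_ne x v with rfl | hxv
      · simp [hvN]
      · rw [Equiv.swap_apply_of_ne_of_ne hxv hxu]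
        tauto
    have huTN : u ∉ T ∩ N := fun h => huT (mem_inter.1 h).1
    have huNT : u ∈ N \ T := mem_sdiff.2 ⟨hu, huT⟩
    set A := (T ∩ N).card with hA
    set B := (N \ T).card with hB
    have hcard1 : (T' ∩ N).card = A + 1 := by
      rw [h1, Finset.card_insert_of_notMem huTN]
    have hcard2 : (N \ T').card = B - 1 := by
      rw [h2, Finset.card_erase_of_mem huNT]
    have hB1 : 1 ≤ B := Finset.card_pos.2 ⟨u, huNT⟩
    have hAB : A + B = G.degree v := by
      rw [hA, hB, Finset.inter_comm, Finset.card_inter_add_card_sdiff]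
      exact (G.card_neighborFinset_eq_degree v).symm ▸ rfl
    have hsum2 : (A + 1) + (B - 1) = G.degree v := by omega
    have key := hf (A, B) (A + 1, B - 1) ⟨v, hAB⟩ ⟨v, hsum2⟩
    simp only [if_pos hu]
    rw [hcard1, hcard2]
    refine le_trans key (le_of_eq ?_)
    have hdpos : (0 : ℝ) < (G.degree v : ℝ) := by exact_mod_cast hd
    have hcastB : ((B - 1 : ℕ) : ℝ) = (B : ℝ) - 1 := by
      have : (1 : ℕ) ≤ B := hB1
      push_cast [this]; ring
    have hdv : ((A : ℝ) + B) = (G.degree v : ℝ) := by exact_mod_cast hAB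
    have e1 : ((A : ℝ)) + (B : ℝ) - (((A + 1 : ℕ) : ℝ) + ((B - 1 : ℕ) : ℝ)) = 0 := by
      push_cast [hcastB]; ring
    have e2 : |(A : ℝ) / ((A : ℝ) + B) - ((A + 1 : ℕ) : ℝ) / (((A + 1 : ℕ) : ℝ) + ((B - 1 : ℕ) : ℝ))|
        = 1 / (G.degree v : ℝ) := by
      have hs : (((A + 1 : ℕ) : ℝ) + ((B - 1 : ℕ) : ℝ)) = (A : ℝ) + B := by
        push_cast [hcastB]; ring
      rw [hs, hdv, div_sub_div_same]
      have : (A : ℝ) - ((A + 1 : ℕ) : ℝ) = -1 := by push_cast; ring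
      rw [this, abs_div, abs_neg, abs_one, abs_of_pos hdpos]
    rw [e1, e2, abs_zero, mul_zero, zero_div, zero_add, mul_one_div]
  · -- swap with a non-neighbor: nothing changes
    have h1 : T' ∩ N = T ∩ N := by
      ext x
      simp only [hT', mem_inter, mem_image_swap]
      constructor
      · rintro ⟨hxT, hxN⟩
        have hxv : x ≠ v := fun h => hvN (h ▸ hxN)
        have hxu : x ≠ u := fun h => hu (h ▸ hxN)
        rw [Equiv.swap_apply_of_ne_of_ne hxv hxu] at hxT
        exact ⟨hxT, hxN⟩
      · rintro ⟨hxT, hxN⟩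
        have hxv : x ≠ v := fun h => hvN (h ▸ hxN)
        have hxu : x ≠ u := fun h => hu (h ▸ hxN)
        rw [Equiv.swap_apply_of_ne_of_ne hxv hxu]
        exact ⟨hxT, hxN⟩
    have h2 : N \ T' = N \ T := by
      ext x
      simp only [hT', mem_sdiff, mem_image_swap]
      constructor
      · rintro ⟨hxN, hxT⟩
        have hxv : x ≠ v := fun h => hvN (h ▸ hxN)
        have hxu : x ≠ u := fun h => hu (h ▸ hxN)
        rw [Equiv.swap_apply_of_ne_of_ne hxv hxu] at hxT
        exact ⟨hxN, hxT⟩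
      · rintro ⟨hxN, hxT⟩
        have hxv : x ≠ v := fun h => hvN (h ▸ hxN)
        have hxu : x ≠ u := fun h => hu (h ▸ hxN)
        rw [Equiv.swap_apply_of_ne_of_ne hxv hxu]
        exact ⟨hxN, hxT⟩
    simp [h1, h2, hu]
end Aux4
section Aux5
set_option linter.unusedSectionVars false
set_option maxHeartbeats 1000000
variable {V : Type*} [Fintype V] [DecidableEq V] {n p q r : ℕ}

lemma key_vertex (G : SimpleGraph V) [DecidableRel G.Adj]
    (S : Fin n → Finset V) (D : Finset (Finset V))
    (hD : ∀ T : Finset V, T ∈ D ↔ ∀ i, (T ∩ S i).card = p)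
    (hdisj : ∀ (i j : Fin n) (x : V), x ∈ S i → x ∈ S j → i = j)
    (hScard : ∀ i, (S i).card = r) (hr : r = p + q)
    (K₁ K₂ : ℝ) (hK₁ : 0 ≤ K₁) (hK₂ : 0 < K₂)
    (f : ℕ × ℕ → ℝ)
    (hf : ∀ u u' : ℕ × ℕ,
      (∃ v : V, u.1 + u.2 = G.degree v) → (∃ v : V, u'.1 + u'.2 = G.degree v) →
      |f u - f u'| ≤
        K₁ * |((u.1 : ℝ) + u.2) - ((u'.1 : ℝ) + u'.2)| / (G.maxDegree : ℝ) +
        K₂ * |(u.1 : ℝ) / ((u.1 : ℝ) + u.2) - (u'.1 : ℝ) / ((u'.1 : ℝ) + u'.2)|)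
    (v : V) {i₀ : Fin n} (hv : v ∈ S i₀) (hd : 0 < G.degree v) :
    |∑ T ∈ D, (if v ∈ T then (q : ℝ) else -(p : ℝ)) *
        f ((T ∩ G.neighborFinset v).card, (G.neighborFinset v \ T).card)|
      * ((r * (r - 1) : ℕ) : ℝ)
      ≤ K₂ / (G.degree v : ℝ) *
        (((S i₀ ∩ G.neighborFinset v).card * (D.card * (p * q)) : ℕ) : ℝ) := by
  classical
  set N := G.neighborFinset v with hN
  set P := S i₀ with hP
  set fv : Finset V → ℝ := fun T => f ((T ∩ N).card, (N \ T).card) with hfv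
  set D1 := D.filter (fun T => v ∈ T) with hD1
  set D2 := D.filter (fun T => v ∉ T) with hD2
  have hPq : ∀ T ∈ D1, (P \ T).card = q := by
    intro T hT
    rw [hD1, mem_filter] at hT
    have h1 : (P ∩ T).card = p := by rw [Finset.inter_comm]; exact (hD T).1 hT.1 i₀
    have := Finset.card_inter_add_card_sdiff P T
    rw [h1, hScard i₀, hr] at this
    omega
  have hPp : ∀ T ∈ D2, (P ∩ T).card = p := by
    intro T hT
    rw [hD2, mem_filter] at hT
    rw [Finset.inter_comm]; exact (hD T).1 hT.1 i₀
  -- split the sum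
  have hsplit : ∑ T ∈ D, (if v ∈ T then (q : ℝ) else -(p : ℝ)) * fv T
      = (∑ T ∈ D1, ∑ _u ∈ P \ T, fv T) - (∑ T ∈ D2, ∑ _u ∈ P ∩ T, fv T) := by
    rw [← Finset.sum_filter_add_sum_filter_not D (fun T => v ∈ T)]
    have e1 : ∑ T ∈ D1, (if v ∈ T then (q : ℝ) else -(p : ℝ)) * fv T
        = ∑ T ∈ D1, ∑ _u ∈ P \ T, fv T := by
      apply Finset.sum_congr rfl
      intro T hT
      have hvT : v ∈ T := (mem_filter.1 hT).2
      rw [if_pos hvT, Finset.sum_const, hPq T hT, nsmul_eq_mul]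
    have e2 : ∑ T ∈ D2, (if v ∈ T then (q : ℝ) else -(p : ℝ)) * fv T
        = -∑ T ∈ D2, ∑ _u ∈ P ∩ T, fv T := by
      rw [← Finset.sum_neg_distrib]
      apply Finset.sum_congr rfl
      intro T hT
      have hvT : v ∉ T := (mem_filter.1 hT).2
      rw [if_neg hvT, Finset.sum_const, hPp T hT, nsmul_eq_mul]
      ring
    rw [e1, e2]
    ring
  -- the bijection
  have hbij : ∑ T ∈ D1, ∑ u ∈ P \ T, fv (T.image (Equiv.swap v u))
      = ∑ T ∈ D2, ∑ _u ∈ P ∩ T, fv T := by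
    rw [Finset.sum_sigma' D1 (fun T => P \ T) (fun T u => fv (T.image (Equiv.swap v u)))]
    rw [Finset.sum_sigma' D2 (fun T => P ∩ T) (fun T _ => fv T)]
    refine Finset.sum_nbij' (fun z => ⟨z.1.image (Equiv.swap v z.2), z.2⟩)
      (fun z => ⟨z.1.image (Equiv.swap v z.2), z.2⟩) ?_ ?_ ?_ ?_ ?_
    · rintro ⟨T, u⟩ hz
      rw [Finset.mem_sigma] at hz ⊢
      obtain ⟨hT, hu⟩ := hz
      rw [hD1, mem_filter] at hT
      rw [mem_sdiff] at hu
      have huP : u ∈ P := hu.1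
      have huT : u ∉ T := hu.2
      constructor
      · rw [hD2, mem_filter]
        refine ⟨image_swap_mem_D S D hD hdisj hv huP hT.1, ?_⟩
        rw [mem_image_swap, Equiv.swap_apply_left]
        exact huT
      · rw [mem_inter]
        refine ⟨huP, ?_⟩
        rw [mem_image_swap, Equiv.swap_apply_right]
        exact hT.2
    · rintro ⟨T, u⟩ hz
      rw [Finset.mem_sigma] at hz ⊢
      obtain ⟨hT, hu⟩ := hz
      rw [hD2, mem_filter] at hT
      rw [mem_inter] at hu
      have huP : u ∈ P := hu.1
      have huT : u ∈ T := hu.2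
      constructor
      · rw [hD1, mem_filter]
        refine ⟨image_swap_mem_D S D hD hdisj hv huP hT.1, ?_⟩
        rw [mem_image_swap, Equiv.swap_apply_left]
        exact huT
      · rw [mem_sdiff]
        refine ⟨huP, ?_⟩
        rw [mem_image_swap, Equiv.swap_apply_right]
        exact hT.2
    · rintro ⟨T, u⟩ _
      exact congrArg (fun X => (⟨X, u⟩ : Σ _ : Finset V, V)) (image_swap_image_swap T)
    · rintro ⟨T, u⟩ _
      exact congrArg (fun X => (⟨X, u⟩ : Σ _ : Finset V, V)) (image_swap_image_swap T)
    · rintro ⟨T, u⟩ _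
      rfl
  have hmain : ∑ T ∈ D, (if v ∈ T then (q : ℝ) else -(p : ℝ)) * fv T
      = ∑ T ∈ D1, ∑ u ∈ P \ T, (fv T - fv (T.image (Equiv.swap v u))) := by
    rw [hsplit, ← hbij]
    rw [← Finset.sum_sub_distrib]
    apply Finset.sum_congr rfl
    intro T _
    rw [← Finset.sum_sub_distrib]
  -- bound
  have habs : |∑ T ∈ D, (if v ∈ T then (q : ℝ) else -(p : ℝ)) * fv T|
      ≤ ∑ T ∈ D1, ((P ∩ N) \ T).card * (K₂ / (G.degree v : ℝ)) := by
    rw [hmain]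
    refine le_trans (Finset.abs_sum_le_sum_abs _ _) ?_
    apply Finset.sum_le_sum
    intro T hT
    refine le_trans (Finset.abs_sum_le_sum_abs _ _) ?_
    have hvT : v ∈ T := (mem_filter.1 hT).2
    have hstep : ∀ u ∈ P \ T, |fv T - fv (T.image (Equiv.swap v u))|
        ≤ if u ∈ N then K₂ / (G.degree v : ℝ) else 0 := by
      intro u hu
      have huT : u ∉ T := (mem_sdiff.1 hu).2
      exact term_bound G K₁ K₂ hK₁ hK₂ f hf v u hd T hvT huT
    refine le_trans (Finset.sum_le_sum hstep) ?_
    rw [Finset.sum_ite_mem, Finset.sum_const]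
    have : (P \ T) ∩ N = (P ∩ N) \ T := by
      ext x; simp only [mem_sdiff, mem_inter]; tauto
    rw [this, nsmul_eq_mul]
  -- counting
  have hcount : ∑ T ∈ D1, ((P ∩ N) \ T).card
      = ∑ u ∈ P ∩ N, (D.filter (fun T => v ∈ T ∧ u ∉ T)).card := by
    have e1 : ∀ T ∈ D1, ((P ∩ N) \ T).card = ∑ u ∈ P ∩ N, (if u ∉ T then 1 else 0) := by
      intro T _
      rw [Finset.sdiff_eq_filter, Finset.card_filter]
    rw [Finset.sum_congr rfl e1, Finset.sum_comm]
    apply Finset.sum_congr rfl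
    intro u _
    rw [← Finset.card_filter, hD1, Finset.filter_filter]
  have hgcount : ∀ u ∈ P ∩ N, (D.filter (fun T => v ∈ T ∧ u ∉ T)).card * (r * (r - 1))
      = D.card * (p * q) := by
    intro u hu
    have huP : u ∈ P := (mem_inter.1 hu).1
    have huN : u ∈ N := (mem_inter.1 hu).2
    have hvu : v ≠ u := by
      intro h
      subst h
      exact (G.notMem_neighborFinset_self v) huN
    exact g_count S D hD hdisj hScard hr hv huP hvu
  have htotal : (∑ T ∈ D1, ((P ∩ N) \ T).card) * (r * (r - 1))
      = (P ∩ N).card * (D.card * (p * q)) := by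
    rw [hcount, Finset.sum_mul]
    rw [Finset.sum_congr rfl hgcount, Finset.sum_const, smul_eq_mul]
  -- put together
  have hrpos : (0 : ℝ) ≤ ((r * (r - 1) : ℕ) : ℝ) := Nat.cast_nonneg _
  calc |∑ T ∈ D, (if v ∈ T then (q : ℝ) else -(p : ℝ)) * fv T| * ((r * (r - 1) : ℕ) : ℝ)
      ≤ (∑ T ∈ D1, ((P ∩ N) \ T).card * (K₂ / (G.degree v : ℝ))) * ((r * (r - 1) : ℕ) : ℝ) := by
        apply mul_le_mul_of_nonneg_right habs hrpos
    _ = K₂ / (G.degree v : ℝ) * (((∑ T ∈ D1, ((P ∩ N) \ T).card) * (r * (r - 1)) : ℕ) : ℝ) := by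
        push_cast
        rw [← Finset.sum_mul]
        ring
    _ = K₂ / (G.degree v : ℝ) * (((P ∩ N).card * (D.card * (p * q)) : ℕ) : ℝ) := by
        rw [htotal]
end Aux5
section Aux6
set_option linter.unusedSectionVars false

lemma ratio_mono {a t t₀ : ℝ} (ha : 0 ≤ a) (ht₀ : 0 < t₀) (ht : t₀ ≤ t) :
    min a t / t ≤ min a t₀ / t₀ := by
  have htpos : 0 < t := lt_of_lt_of_le ht₀ ht
  rw [div_le_div_iff₀ htpos ht₀]
  rcases le_total a t₀ with h | h
  · rw [min_eq_left (le_trans h ht), min_eq_left h]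
    exact mul_le_mul_of_nonneg_left ht ha
  · rw [min_eq_right h]
    calc min a t * t₀ ≤ t * t₀ :=
          mul_le_mul_of_nonneg_right (min_le_right a t) ht₀.le
      _ = t₀ * t := mul_comm _ _

lemma card_block (r n : ℕ) (hr0 : 0 < r) (i : Fin n) :
    ((Finset.univ.filter (fun j : Fin (r * n) => j.1 / r = i.1)).card) = r := by
  have hbnd : ∀ k : Fin r, r * i.1 + k.1 < r * n := by
    intro k
    have h1 : r * (i.1 + 1) ≤ r * n := Nat.mul_le_mul_left r i.isLt
    have h2 : r * (i.1 + 1) = r * i.1 + r := by ring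
    have := k.2
    omega
  have : ((Finset.univ.filter (fun j : Fin (r * n) => j.1 / r = i.1)).card)
      = (Finset.univ : Finset (Fin r)).card := by
    apply Finset.card_nbij' (fun j => (⟨j.1 % r, Nat.mod_lt _ hr0⟩ : Fin r))
      (fun k => (⟨r * i.1 + k.1, hbnd k⟩ : Fin (r * n)))
    · intro a _; exact Finset.mem_univ _
    · intro k _
      rw [Finset.mem_coe, Finset.mem_filter]
      refine ⟨Finset.mem_univ _, ?_⟩
      simp only
      rw [Nat.mul_add_div hr0, Nat.div_eq_of_lt k.2, add_zero]
    · intro j hj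
      rw [Finset.mem_coe, Finset.mem_filter] at hj
      apply Fin.ext
      simp only
      rw [← hj.2]
      exact Nat.div_add_mod j.1 r
    · intro k _
      apply Fin.ext
      simp only
      rw [Nat.mul_add_mod, Nat.mod_eq_of_lt k.2]
  rw [this, Finset.card_univ, Fintype.card_fin]

lemma mem_block {V : Type*} [Fintype V] [DecidableEq V] {r n : ℕ}
    (w : Fin (r * n) → V) (hw : Function.Bijective w) (x : V) (i : Fin n) :
    x ∈ (Finset.univ.filter (fun j : Fin (r * n) => j.1 / r = i.1)).image w
      ↔ ((Equiv.ofBijective w hw).symm x).1 / r = i.1 := by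
  simp only [Finset.mem_image, Finset.mem_filter, Finset.mem_univ, true_and]
  constructor
  · rintro ⟨j, hj, rfl⟩
    have : (Equiv.ofBijective w hw).symm (w j) = j := Equiv.symm_apply_apply _ j
    rw [this]
    exact hj
  · intro h
    exact ⟨(Equiv.ofBijective w hw).symm x, h, Equiv.ofBijective_apply_symm_apply w hw x⟩
end Aux6
set_option maxHeartbeats 1600000 in
theorem stmt19
    {V : Type*} [Fintype V] [DecidableEq V]
    (G : SimpleGraph V) [DecidableRel G.Adj]
    (p q r n : ℕ) (hp : 1 ≤ p) (hq : 1 ≤ q) (hr : r = p + q) (hn : 1 ≤ n)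
    (hcard : Fintype.card V = r * n)
    (hNoIso : ∀ v : V, 0 < G.degree v)
    (w : Fin (r * n) → V) (hw : Function.Bijective w)
    (hmono : ∀ i j : Fin (r * n), i ≤ j → G.degree (w j) ≤ G.degree (w i))
    (K₁ K₂ : ℝ) (hK₁ : 0 ≤ K₁) (hK₂ : 0 < K₂)
    (f : ℕ × ℕ → ℝ)
    (hf : ∀ u u' : ℕ × ℕ,
      (∃ v : V, u.1 + u.2 = G.degree v) → (∃ v : V, u'.1 + u'.2 = G.degree v) →
      |f u - f u'| ≤
        K₁ * |((u.1 : ℝ) + u.2) - ((u'.1 : ℝ) + u'.2)| / (G.maxDegree : ℝ) +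
        K₂ * |(u.1 : ℝ) / ((u.1 : ℝ) + u.2) - (u'.1 : ℝ) / ((u'.1 : ℝ) + u'.2)|) :
    let S : Fin n → Finset V := fun i =>
      (univ.filter (fun j : Fin (r * n) => j.1 / r = i.1)).image w
    let D : Finset (Finset V) :=
      univ.filter (fun T : Finset V => ∀ i : Fin n, (T ∩ S i).card = p)
    let xi : Finset V → ℝ := fun T =>
      (1 / ((p : ℝ) * q * n)) *
        ∑ v, (if v ∈ T then (q : ℝ) else -(p : ℝ)) *
          f ((T ∩ G.neighborFinset v).card, (G.neighborFinset v \ T).card)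
    |(∑ T ∈ D, xi T) / (D.card : ℝ)| ≤
      (min ((r : ℝ) - 1) (G.minDegree : ℝ)) * (K₁ + K₂) /
        (((r : ℝ) - 1) * (G.minDegree : ℝ)) := by
  intro S D xi
  have hr1 : 1 ≤ r := by omega
  have hr2 : 2 ≤ r := by omega
  have hr0 : 0 < r := by omega
  have hn0 : 0 < n := hn
  have hD : ∀ T : Finset V, T ∈ D ↔ ∀ i, (T ∩ S i).card = p := by
    intro T
    simp only [D, Finset.mem_filter, Finset.mem_univ, true_and]
  have hSmem : ∀ (x : V) (i : Fin n),
      x ∈ S i ↔ ((Equiv.ofBijective w hw).symm x).1 / r = i.1 :=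
    fun x i => mem_block w hw x i
  have hdisj : ∀ (i j : Fin n) (x : V), x ∈ S i → x ∈ S j → i = j := by
    intro i j x hx hy
    apply Fin.ext
    rw [← (hSmem x i).1 hx, ← (hSmem x j).1 hy]
  have hScard : ∀ i, (S i).card = r := by
    intro i
    have h1 : (S i).card
        = (Finset.univ.filter (fun j : Fin (r * n) => j.1 / r = i.1)).card :=
      Finset.card_image_of_injective _ hw.injective
    rw [h1, card_block r n hr0 i]
  have hcover : ∀ x : V, ∃ i : Fin n, x ∈ S i := by
    intro x
    have hlt : ((Equiv.ofBijective w hw).symm x).1 / r < n := by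
      have h2 := ((Equiv.ofBijective w hw).symm x).2
      exact Nat.div_lt_of_lt_mul h2
    exact ⟨⟨_, hlt⟩, (hSmem x ⟨_, hlt⟩).2 rfl⟩
  have hVne : Nonempty V := by
    rw [← Fintype.card_pos_iff, hcard]
    exact Nat.mul_pos hr0 hn0
  have hdmin : 0 < G.minDegree := by
    obtain ⟨v₀, hv₀⟩ := G.exists_minimal_degree_vertex
    rw [hv₀]; exact hNoIso v₀
  have hdminR : (0 : ℝ) < (G.minDegree : ℝ) := by exact_mod_cast hdmin
  have hrR : (1 : ℝ) ≤ (r : ℝ) - 1 := by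
    have : (2 : ℝ) ≤ (r : ℝ) := by exact_mod_cast hr2
    linarith
  set M : ℝ := min ((r : ℝ) - 1) (G.minDegree : ℝ) with hM
  have hMnn : 0 ≤ M := le_min (by linarith) hdminR.le
  have hRHSnn : 0 ≤ M * (K₁ + K₂) / (((r : ℝ) - 1) * (G.minDegree : ℝ)) := by
    apply div_nonneg
    · exact mul_nonneg hMnn (by linarith)
    · exact mul_nonneg (by linarith) hdminR.le
  rcases Nat.eq_zero_or_pos D.card with hDc0 | hDcpos
  · rw [Finset.card_eq_zero] at hDc0
    rw [hDc0]
    simpa using hRHSnn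
  -- main case
  set Dc : ℝ := (D.card : ℝ) with hDcdef
  have hDcR : (0 : ℝ) < Dc := by rw [hDcdef]; exact_mod_cast hDcpos
  set Rc : ℝ := ((r * (r - 1) : ℕ) : ℝ) with hRc
  have hRcval : Rc = (r : ℝ) * ((r : ℝ) - 1) := by
    rw [hRc]
    push_cast [Nat.cast_sub hr1]
    ring
  have hRcpos : 0 < Rc := by
    rw [hRcval]
    have : (0 : ℝ) < (r : ℝ) := by exact_mod_cast hr0
    nlinarith
  set PQ : ℝ := (p : ℝ) * (q : ℝ) with hPQ
  have hp0 : (0 : ℝ) < (p : ℝ) := by exact_mod_cast hp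
  have hq0 : (0 : ℝ) < (q : ℝ) := by exact_mod_cast hq
  have hn0R : (0 : ℝ) < (n : ℝ) := by exact_mod_cast hn0
  -- per-vertex bound
  have hver : ∀ v : V,
      |∑ T ∈ D, (if v ∈ T then (q : ℝ) else -(p : ℝ)) *
        f ((T ∩ G.neighborFinset v).card, (G.neighborFinset v \ T).card)| * Rc
      ≤ K₂ * (M / (G.minDegree : ℝ)) * (Dc * PQ) := by
    intro v
    obtain ⟨i₀, hvi⟩ := hcover v
    have hdv : 0 < G.degree v := hNoIso v
    have hdvR : (0 : ℝ) < (G.degree v : ℝ) := by exact_mod_cast hdv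
    have hk := key_vertex G S D hD hdisj hScard hr K₁ K₂ hK₁ hK₂ f hf v hvi hdv
    refine le_trans hk ?_
    -- massage the right side
    have hm1 : (S i₀ ∩ G.neighborFinset v).card ≤ r - 1 := by
      have hsub : S i₀ ∩ G.neighborFinset v ⊆ (S i₀).erase v := by
        intro x hx
        rw [Finset.mem_erase]
        have hxN := (Finset.mem_inter.1 hx).2
        refine ⟨?_, (Finset.mem_inter.1 hx).1⟩
        intro hxv
        subst hxv
        exact (G.notMem_neighborFinset_self x) hxN
      have := Finset.card_le_card hsub
      rwa [Finset.card_erase_of_mem hvi, hScard i₀] at this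
    have hm2 : (S i₀ ∩ G.neighborFinset v).card ≤ G.degree v := by
      have := Finset.card_le_card (Finset.inter_subset_right :
        S i₀ ∩ G.neighborFinset v ⊆ G.neighborFinset v)
      rwa [G.card_neighborFinset_eq_degree v] at this
    have hmR : ((S i₀ ∩ G.neighborFinset v).card : ℝ)
        ≤ min ((r : ℝ) - 1) ((G.degree v : ℝ)) := by
      apply le_min
      · have : ((S i₀ ∩ G.neighborFinset v).card : ℝ) ≤ ((r - 1 : ℕ) : ℝ) := by
          exact_mod_cast hm1
        rwa [Nat.cast_sub hr1, Nat.cast_one] at this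
      · exact_mod_cast hm2
    have hdmindv : (G.minDegree : ℝ) ≤ (G.degree v : ℝ) := by
      exact_mod_cast G.minDegree_le_degree v
    have hrat : min ((r : ℝ) - 1) ((G.degree v : ℝ)) / (G.degree v : ℝ)
        ≤ M / (G.minDegree : ℝ) :=
      ratio_mono (by linarith) hdminR hdmindv
    calc K₂ / (G.degree v : ℝ) *
          (((S i₀ ∩ G.neighborFinset v).card * (D.card * (p * q)) : ℕ) : ℝ)
        = K₂ * (((S i₀ ∩ G.neighborFinset v).card : ℝ) / (G.degree v : ℝ)) * (Dc * PQ) := by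
          push_cast
          field_simp
          ring
      _ ≤ K₂ * (min ((r : ℝ) - 1) ((G.degree v : ℝ)) / (G.degree v : ℝ)) * (Dc * PQ) := by
          have hdiv : ((S i₀ ∩ G.neighborFinset v).card : ℝ) / (G.degree v : ℝ)
              ≤ min ((r : ℝ) - 1) ((G.degree v : ℝ)) / (G.degree v : ℝ) := by gcongr
          apply mul_le_mul_of_nonneg_right
          · exact mul_le_mul_of_nonneg_left hdiv hK₂.le
          · exact mul_nonneg hDcR.le (mul_nonneg hp0.le hq0.le)
      _ ≤ K₂ * (M / (G.minDegree : ℝ)) * (Dc * PQ) := by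
          apply mul_le_mul_of_nonneg_right
          · exact mul_le_mul_of_nonneg_left hrat hK₂.le
          · exact mul_nonneg hDcR.le (mul_nonneg hp0.le hq0.le)
  -- sum over vertices
  have hsum : |∑ T ∈ D, xi T| * Rc
      ≤ (1 / ((p : ℝ) * q * n)) * ((r * n : ℕ) : ℝ) * (K₂ * (M / (G.minDegree : ℝ)) * (Dc * PQ)) := by
    have hswap : ∑ T ∈ D, xi T
        = (1 / ((p : ℝ) * q * n)) * ∑ v : V, ∑ T ∈ D,
            (if v ∈ T then (q : ℝ) else -(p : ℝ)) *
              f ((T ∩ G.neighborFinset v).card, (G.neighborFinset v \ T).card) := by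
      simp only [xi]
      rw [← Finset.mul_sum]
      congr 1
      exact Finset.sum_comm
    have hcnn : (0 : ℝ) ≤ 1 / ((p : ℝ) * q * n) := by positivity
    rw [hswap, abs_mul, abs_of_nonneg hcnn]
    calc 1 / ((p : ℝ) * q * n) * |∑ v : V, ∑ T ∈ D, _| * Rc
        ≤ 1 / ((p : ℝ) * q * n) * (∑ v : V, |∑ T ∈ D,
            (if v ∈ T then (q : ℝ) else -(p : ℝ)) *
              f ((T ∩ G.neighborFinset v).card, (G.neighborFinset v \ T).card)|) * Rc := by
          apply mul_le_mul_of_nonneg_right _ hRcpos.le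
          exact mul_le_mul_of_nonneg_left (Finset.abs_sum_le_sum_abs _ _) hcnn
      _ = 1 / ((p : ℝ) * q * n) * (∑ v : V, |∑ T ∈ D,
            (if v ∈ T then (q : ℝ) else -(p : ℝ)) *
              f ((T ∩ G.neighborFinset v).card, (G.neighborFinset v \ T).card)| * Rc) := by
          rw [← Finset.sum_mul]
          ring
      _ ≤ 1 / ((p : ℝ) * q * n) * (∑ _v : V, K₂ * (M / (G.minDegree : ℝ)) * (Dc * PQ)) := by
          apply mul_le_mul_of_nonneg_left _ hcnn
          exact Finset.sum_le_sum (fun v _ => hver v)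
      _ = 1 / ((p : ℝ) * q * n) * ((r * n : ℕ) : ℝ) * (K₂ * (M / (G.minDegree : ℝ)) * (Dc * PQ)) := by
          rw [Finset.sum_const, Finset.card_univ, hcard, nsmul_eq_mul]
          ring
  -- final arithmetic
  have hXeq : (1 / ((p : ℝ) * q * n)) * ((r * n : ℕ) : ℝ)
      * (K₂ * (M / (G.minDegree : ℝ)) * (Dc * PQ))
      = (r : ℝ) * (M / (G.minDegree : ℝ)) * Dc * K₂ := by
    rw [hPQ]
    push_cast
    field_simp
  have hTarget : (r : ℝ) * (M / (G.minDegree : ℝ)) * Dc * K₂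
      ≤ (M * (K₁ + K₂) / (((r : ℝ) - 1) * (G.minDegree : ℝ))) * Dc * Rc := by
    have hReq : (M * (K₁ + K₂) / (((r : ℝ) - 1) * (G.minDegree : ℝ))) * Dc * Rc
        = (r : ℝ) * (M / (G.minDegree : ℝ)) * Dc * (K₁ + K₂) := by
      rw [hRcval]
      field_simp
    rw [hReq]
    apply mul_le_mul_of_nonneg_left (by linarith)
    apply mul_nonneg
    apply mul_nonneg
    · positivity
    · exact div_nonneg hMnn hdminR.le
    · exact hDcR.le
  have hfinal : |∑ T ∈ D, xi T| * Rc
      ≤ (M * (K₁ + K₂) / (((r : ℝ) - 1) * (G.minDegree : ℝ))) * Dc * Rc := by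
    calc |∑ T ∈ D, xi T| * Rc
        ≤ (1 / ((p : ℝ) * q * n)) * ((r * n : ℕ) : ℝ)
          * (K₂ * (M / (G.minDegree : ℝ)) * (Dc * PQ)) := hsum
      _ = (r : ℝ) * (M / (G.minDegree : ℝ)) * Dc * K₂ := hXeq
      _ ≤ _ := hTarget
  have habs : |∑ T ∈ D, xi T|
      ≤ (M * (K₁ + K₂) / (((r : ℝ) - 1) * (G.minDegree : ℝ))) * Dc :=
    le_of_mul_le_mul_right hfinal hRcpos
  rw [abs_div, abs_of_nonneg hDcR.le]
  rw [div_le_iff₀ hDcR]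
  exact habs
end
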